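/- arXiv:1906.01053 — 3 statements merged into one kernel-verified Lean document; each statement's English description precedes it below -/
import Mathlib

section
/- Let ε ∈ {1,2}^{p−1} and δ ∈ {0,1}^p with δ not identically zero, and consider the kernel L^ε_δ. If the set of indices k with δ_k = 1 is not of the form (k_1, k_2] for some 0 ≤ k_1 < k_2 ≤ p — that is, if δ does not consist of a (possibly empty) run of 0s, followed by a nonempty run of 1s, followed by a (possibly empty) run of 0s — then L^ε_δ(i,j) = 0 for all 1 ≤ i, j ≤ N. Moreover, if δ_k = 1 exactly for k ∈ (k_1, k_2], then L^ε_δ(i,j) = 0 for all i, j unless ε_1 = … = ε_{k_1−1} = 2 and ε_{k_2+1} = … = ε_{p−1} = 1. -/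
open MeasureTheory ProbabilityTheory Complex
open scoped Real BigOperators Nat

noncomputable section

/-- Forward difference operator `∇f(x) = f(x+1) − f(x)`. -/
def nab (f : ℤ → ℂ) : ℤ → ℂ := fun x => f (x + 1) - f x

/-- Inverse difference: `∇⁻¹f(x) = ∑_{y<x} f(y)` (a `tsum`; for functions vanishing
to the left of some integer this is the finite sum of the paper). -/
def nabInv (f : ℤ → ℂ) : ℤ → ℂ := fun x => ∑' y : {y : ℤ // y < x}, f y.1

/-- `∇^k` for `k : ℤ`. -/
def nabIter (k : ℤ) (f : ℤ → ℂ) : ℤ → ℂ :=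
  if 0 ≤ k then nab^[k.toNat] f else nabInv^[(-k).toNat] f

/-- The negative binomial weight `w_m(x)`. -/
def wgt (q : ℝ) (m : ℕ) : ℤ → ℂ := fun x =>
  if 0 ≤ x then ((x.toNat + m - 1).choose x.toNat : ℂ) * ((1 : ℂ) - (q : ℂ)) ^ m * (q : ℂ) ^ x
  else 0

/-- Component `x_k` (1-based) of a vector `x : Fin N → ℤ`. -/
def vcomp {N : ℕ} (x : Fin N → ℤ) (k : ℕ) : ℤ :=
  if h : k - 1 < N then x ⟨k - 1, h⟩ else 0

/-- 1-based access to a finite tuple, extended by `0` out of range. -/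
def fext {d : ℕ} {α : Type*} [Zero α] (x : Fin d → α) : ℕ → α := fun k =>
  if h : 1 ≤ k ∧ k ≤ d then x ⟨k - 1, by omega⟩ else 0

/-- The growth function `𝐆(m,n)` built from weights `w`. -/
def growth (w : ℕ → ℕ → ℕ) : ℕ → ℕ → ℕ
  | 0, _ => 0
  | _ + 1, 0 => 0
  | m + 1, n + 1 => max (growth w m (n + 1)) (growth w (m + 1) n) + w (m + 1) (n + 1)
  termination_by m n => m + n

/-- Normalized contour integral `(1/(2πi)) ∮_{|z−c|=R} f(z) dz` (counterclockwise circle). -/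
def cint (c : ℂ) (R : ℝ) (f : ℂ → ℂ) : ℂ :=
  (2 * Real.pi * Complex.I)⁻¹ * (∮ z in C(c, R), f z)

/-- Iterated normalized contour integrals with centers `c` and radii `R`. -/
def multiCintC : (k : ℕ) → (c : Fin k → ℂ) → (R : Fin k → ℝ) → ((Fin k → ℂ) → ℂ) → ℂ
  | 0, _, _, f => f ![]
  | k + 1, c, R, f =>
      cint (c 0) (R 0) fun z =>
        multiCintC k (fun t => c t.succ) (fun t => R t.succ) fun w => f (Fin.cons z w)

/-- `G*(w | n, m, a)`. -/
def Gstar (q : ℝ) (n m a : ℤ) (w : ℂ) : ℂ :=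
  w ^ n * (1 - w) ^ (a + m) / (1 - w / (1 - (q : ℂ))) ^ m

/-- `G(w | n, m, a) = G*(w | n,m,a)/G*(1−√q | n,m,a)`. -/
def Gfun (q : ℝ) (n m a : ℤ) (w : ℂ) : ℂ :=
  Gstar q n m a w / Gstar q n m a (1 - (Real.sqrt q : ℂ))

/-- The block index `r` such that `n_{r−1} < i ≤ n_r`. -/
def blockIdx (n : ℕ → ℕ) (i : ℕ) : ℕ := sInf {r : ℕ | i ≤ n r}

/-- `r* = min{r, p−1}` for the block of `i`. -/
def rstar (p : ℕ) (n : ℕ → ℕ) (i : ℕ) : ℕ := min (blockIdx n i) (p - 1)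

/-- `m(i) = m_{r*}`. -/
def mOf (p : ℕ) (n m : ℕ → ℕ) (i : ℕ) : ℕ := m (rstar p n i)

/-- `a(i) = a_{r*}`. -/
def aOf (p : ℕ) (n : ℕ → ℕ) (a : ℕ → ℤ) (i : ℕ) : ℤ := a (rstar p n i)

/-- `n(i) = n_{r*}`. -/
def nOf (p : ℕ) (n : ℕ → ℕ) (i : ℕ) : ℕ := n (rstar p n i)


/-- The kernel `L^ε_δ(i,j)`: a `(p+2)`-fold contour integral where the `z_k`-contour
is the circle `C_k` of radius `ρ_k` centered at `1` if `δ_k = 1` and at `0` if `δ_k = 0`. -/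
def Ldelta (q : ℝ) (p : ℕ) (n m : ℕ → ℕ) (a : ℕ → ℤ) (τ1 τ2 : ℝ)
    (δ : ℕ → ℕ) (ρ : ℕ → ℝ) (i j : ℕ) : ℂ :=
  cint 0 τ1 (fun ζ1 => cint 0 τ2 (fun ζ2 =>
    multiCintC p (fun t => if δ (t.1 + 1) = 1 then 1 else 0) (fun t => ρ (t.1 + 1))
      (fun zv =>
        ((∏ k ∈ Finset.Icc 1 p,
            Gfun q ((n k : ℤ) - n (k - 1)) ((m k : ℤ) - m (k - 1)) (a k - a (k - 1))
              (fext zv k))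
          * (∏ k ∈ Finset.Icc 1 (p - 1), (fext zv k - fext zv (k + 1))⁻¹)
          * ((1 - ζ1) / (1 - fext zv 1)))
        / (Gfun q (i : ℤ) (mOf p n m i : ℤ) (aOf p n a i) ζ1
           * Gfun q ((n p : ℤ) - j + 1) ((m p : ℤ) - mOf p n m j) (a p - aOf p n a j) ζ2
           * ((fext zv 1 - ζ1) * (fext zv p - ζ2))))))

namespace S11

open Metric

def shf {α : Type*} (g : ℕ → α) : ℕ → α := fun j => g (j + 1)

def chainF : (d : ℕ) → (ℕ → ℂ → ℂ) → (Fin d → ℂ) → ℂ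
  | 0, _, _ => 1
  | 1, g, w => g 0 (w 0)
  | (d + 2), g, w => g 0 (w 0) * (w 0 - w 1)⁻¹ * chainF (d + 1) (shf g) (fun t => w t.succ)

def cpl : (e : ℕ) → ℂ → (Fin e → ℂ) → ℂ
  | 0, _, _ => 1
  | (_ + 1), x, u => (x - u 0)⁻¹

lemma chainF_succ (e : ℕ) (g : ℕ → ℂ → ℂ) (w : Fin (e + 1) → ℂ) :
    chainF (e + 1) g w = g 0 (w 0) * cpl e (w 0) (Fin.tail w) * chainF e (shf g) (Fin.tail w) := by
  cases e with
  | zero => simp [chainF, cpl]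
  | succ e =>
    simp only [chainF, cpl, Fin.tail]
    rfl

lemma chainF_cons (e : ℕ) (g : ℕ → ℂ → ℂ) (z : ℂ) (w : Fin e → ℂ) :
    chainF (e + 1) g (Fin.cons z w) = g 0 z * cpl e z w * chainF e (shf g) w := by
  rw [chainF_succ]
  simp [Fin.tail_cons]

lemma cint_const_mul (c : ℂ) (R : ℝ) (a : ℂ) (f : ℂ → ℂ) :
    cint c R (fun z => a * f z) = a * cint c R f := by
  unfold cint
  have : (∮ z in C(c, R), a * f z) = a * ∮ z in C(c, R), f z := by
    simp only [circleIntegral, smul_eq_mul]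
    rw [← intervalIntegral.integral_const_mul]
    apply intervalIntegral.integral_congr
    intro θ _
    ring
  rw [this]; ring

lemma cint_zero (c : ℂ) (R : ℝ) (f : ℂ → ℂ) (h : ∀ θ : ℝ, f (circleMap c R θ) = 0) :
    cint c R f = 0 := by
  unfold cint
  have : (∮ z in C(c, R), f z) = 0 := by
    simp only [circleIntegral, h, smul_zero]
    simp
  rw [this, mul_zero]

lemma cint_congr_sphere (c : ℂ) (R : ℝ) (f g : ℂ → ℂ)
    (h : ∀ θ : ℝ, f (circleMap c R θ) = g (circleMap c R θ)) :
    cint c R f = cint c R g := by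
  unfold cint
  congr 1
  simp only [circleIntegral]
  apply intervalIntegral.integral_congr
  intro θ _
  simp only []
  rw [h]

lemma multiCintC_const_mul (d : ℕ) (c : Fin d → ℂ) (R : Fin d → ℝ) (a : ℂ)
    (f : (Fin d → ℂ) → ℂ) :
    multiCintC d c R (fun w => a * f w) = a * multiCintC d c R f := by
  induction d generalizing a with
  | zero => simp [multiCintC]
  | succ d ih =>
    simp only [multiCintC]
    rw [← cint_const_mul]
    congr 1
    funext z
    exact ih _ _ _ _

lemma multiCint_succ_nat (e : ℕ) (cc : ℕ → ℂ) (R : ℕ → ℝ) (f : (Fin (e + 1) → ℂ) → ℂ) :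
    multiCintC (e + 1) (fun t => cc t.1) (fun t => R t.1) f
      = cint (cc 0) (R 0) (fun z =>
          multiCintC e (fun t => shf cc t.1) (fun t => shf R t.1) (fun w => f (Fin.cons z w))) := by
  simp only [multiCintC, shf, Fin.val_succ]
  rfl

def psiF (e : ℕ) (g : ℕ → ℂ → ℂ) (cc : ℕ → ℂ) (R : ℕ → ℝ) (x : ℂ) : ℂ :=
  multiCintC e (fun t => cc t.1) (fun t => R t.1) (fun u => cpl e x u * chainF e g u)

lemma psiF_zero (g : ℕ → ℂ → ℂ) (cc : ℕ → ℂ) (R : ℕ → ℝ) (x : ℂ) :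
    psiF 0 g cc R x = 1 := by
  simp [psiF, multiCintC, cpl, chainF]

lemma psiF_succ (e : ℕ) (g : ℕ → ℂ → ℂ) (cc : ℕ → ℂ) (R : ℕ → ℝ) (x : ℂ) :
    psiF (e + 1) g cc R x
      = cint (cc 0) (R 0) (fun z =>
          (x - z)⁻¹ * (g 0 z * psiF e (shf g) (shf cc) (shf R) z)) := by
  unfold psiF
  rw [multiCint_succ_nat]
  congr 1
  funext z
  have : (fun w : Fin e → ℂ => cpl (e + 1) x (Fin.cons z w) * chainF (e + 1) g (Fin.cons z w))
      = fun w => ((x - z)⁻¹ * g 0 z) * (cpl e z w * chainF e (shf g) w) := by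
    funext w
    rw [chainF_cons]
    simp only [cpl, Fin.cons_zero]
    ring
  rw [this, multiCintC_const_mul]
  ring

lemma peel_chain (e : ℕ) (g : ℕ → ℂ → ℂ) (cc : ℕ → ℂ) (R : ℕ → ℝ) :
    multiCintC (e + 1) (fun t => cc t.1) (fun t => R t.1) (chainF (e + 1) g)
      = cint (cc 0) (R 0) (fun z => g 0 z * psiF e (shf g) (shf cc) (shf R) z) := by
  rw [multiCint_succ_nat]
  congr 1
  funext z
  have : (fun w : Fin e → ℂ => chainF (e + 1) g (Fin.cons z w))
      = fun w => g 0 z * (cpl e z w * chainF e (shf g) w) := by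
    funext w
    rw [chainF_cons]; ring
  rw [this, multiCintC_const_mul]
  rfl

lemma psi_contOn (e : ℕ) (g : ℕ → ℂ → ℂ) (cc : ℕ → ℂ) (R : ℕ → ℝ)
    (hR : ∀ j, j < e → 0 ≤ R j)
    (hg : ∀ j, j < e → ContinuousOn (g j) (sphere (cc j) (R j)))
    (hdisj : ∀ j, j + 1 < e → ∀ z ∈ sphere (cc j) (R j), z ∉ sphere (cc (j+1)) (R (j+1)))
    (S : Set ℂ) (hS : 0 < e → ∀ x ∈ S, x ∉ sphere (cc 0) (R 0)) :
    ContinuousOn (psiF e g cc R) S := by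
  induction e generalizing g cc R S with
  | zero =>
    have : psiF 0 g cc R = fun _ => (1 : ℂ) := by
      funext x; exact psiF_zero g cc R x
    rw [this]; exact continuousOn_const
  | succ e ih =>
    have hmem : ∀ θ : ℝ, circleMap (cc 0) (R 0) θ ∈ sphere (cc 0) (R 0) :=
      fun θ => circleMap_mem_sphere _ (hR 0 (Nat.succ_pos e)) θ
    have hΦ : ContinuousOn (psiF e (shf g) (shf cc) (shf R)) (sphere (cc 0) (R 0)) := by
      apply ih
      · exact fun j hj => hR (j+1) (by omega)
      · exact fun j hj => hg (j+1) (by omega)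
      · exact fun j hj => hdisj (j+1) (by omega)
      · exact fun he x hx => hdisj 0 (by omega) x hx
    have hrw : ∀ x, psiF (e+1) g cc R x
        = (2 * Real.pi * Complex.I)⁻¹ * ∫ θ in (0:ℝ)..(2 * Real.pi),
            (circleMap 0 (R 0) θ * Complex.I) *
              ((x - circleMap (cc 0) (R 0) θ)⁻¹ *
                (g 0 (circleMap (cc 0) (R 0) θ) *
                  psiF e (shf g) (shf cc) (shf R) (circleMap (cc 0) (R 0) θ))) := by
      intro x
      rw [psiF_succ]
      unfold cint circleIntegral
      congr 1
      apply intervalIntegral.integral_congr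
      intro θ _
      simp only [deriv_circleMap, smul_eq_mul]
    have : ContinuousOn (fun x => (2 * Real.pi * Complex.I)⁻¹ * ∫ θ in (0:ℝ)..(2 * Real.pi),
        (circleMap 0 (R 0) θ * Complex.I) *
          ((x - circleMap (cc 0) (R 0) θ)⁻¹ *
            (g 0 (circleMap (cc 0) (R 0) θ) *
              psiF e (shf g) (shf cc) (shf R) (circleMap (cc 0) (R 0) θ)))) S := by
      rw [continuousOn_iff_continuous_restrict]
      apply Continuous.mul continuous_const
      apply intervalIntegral.continuous_parametric_intervalIntegral_of_continuous'
        (μ := MeasureTheory.volume)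
      have hcm : Continuous (fun p : ↥S × ℝ => circleMap (cc 0) (R 0) p.2) :=
        (continuous_circleMap _ _).comp continuous_snd
      apply Continuous.mul
      · exact ((continuous_circleMap 0 (R 0)).comp continuous_snd).mul continuous_const
      apply Continuous.mul
      · apply Continuous.inv₀
        · exact (continuous_subtype_val.comp continuous_fst).sub hcm
        · intro p
          have h1 : (p.1 : ℂ) ∉ sphere (cc 0) (R 0) := hS (Nat.succ_pos e) _ p.1.2
          have h2 := hmem p.2
          intro hzero
          rw [sub_eq_zero] at hzero
          exact h1 (hzero ▸ h2)
      apply Continuous.mul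
      · exact (hg 0 (Nat.succ_pos e)).comp_continuous hcm (fun p => hmem p.2)
      · exact hΦ.comp_continuous hcm (fun p => hmem p.2)
    exact this.congr (fun x _ => hrw x)

lemma swap_int (F : ℝ → ℝ → ℂ) (hF : Continuous (Function.uncurry F)) :
    (∫ θ in (0:ℝ)..(2 * Real.pi), ∫ ph in (0:ℝ)..(2 * Real.pi), F θ ph)
      = ∫ ph in (0:ℝ)..(2 * Real.pi), ∫ θ in (0:ℝ)..(2 * Real.pi), F θ ph := by
  have h2π : (0:ℝ) ≤ 2 * Real.pi := by positivity
  have hint : MeasureTheory.Integrable (Function.uncurry F)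
      ((MeasureTheory.volume.restrict (Set.Ioc (0:ℝ) (2 * Real.pi))).prod
        (MeasureTheory.volume.restrict (Set.Ioc (0:ℝ) (2 * Real.pi)))) := by
    rw [MeasureTheory.Measure.prod_restrict]
    have hic : MeasureTheory.IntegrableOn (Function.uncurry F)
        ((Set.Icc (0:ℝ) (2 * Real.pi)) ×ˢ (Set.Icc (0:ℝ) (2 * Real.pi)))
        (MeasureTheory.volume.prod MeasureTheory.volume) := by
      rw [← MeasureTheory.Measure.volume_eq_prod]
      exact hF.continuousOn.integrableOn_compact (isCompact_Icc.prod isCompact_Icc)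
    rw [← MeasureTheory.Measure.volume_eq_prod]
    exact hic.mono_set (Set.prod_mono Set.Ioc_subset_Icc_self Set.Ioc_subset_Icc_self)
  have e1 : ∀ G : ℝ → ℂ, (∫ t in (0:ℝ)..(2 * Real.pi), G t)
      = ∫ t in Set.Ioc (0:ℝ) (2 * Real.pi), G t := fun G =>
    intervalIntegral.integral_of_le h2π
  rw [e1]
  have e2 : ∀ θ, (∫ ph in (0:ℝ)..(2 * Real.pi), F θ ph)
      = ∫ ph in Set.Ioc (0:ℝ) (2 * Real.pi), F θ ph := fun θ => e1 _
  simp only [e2]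
  rw [MeasureTheory.integral_integral_swap hint]
  rw [e1]
  congr 1
  funext ph
  rw [e1]

lemma swap_cauchy (c0 c1 : ℂ) (R0 R1 : ℝ) (hR0 : 0 ≤ R0) (hR1 : 0 ≤ R1)
    (g0 h : ℂ → ℂ)
    (hdisj : ∀ z ∈ sphere c0 R0, z ∉ sphere c1 R1)
    (hg0c : ContinuousOn g0 (sphere c0 R0))
    (hh : ContinuousOn h (sphere c1 R1))
    (hg0d : ∀ z ∈ closedBall c0 R0, DifferentiableAt ℂ g0 z)
    (hout : ∀ w ∈ sphere c1 R1, w ∉ closedBall c0 R0) :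
    cint c0 R0 (fun z => g0 z * cint c1 R1 (fun w => (z - w)⁻¹ * h w)) = 0 := by
  set cm0 : ℝ → ℂ := circleMap c0 R0 with hcm0
  set cm1 : ℝ → ℂ := circleMap c1 R1 with hcm1
  have hmem0 : ∀ θ, cm0 θ ∈ sphere c0 R0 := fun θ => circleMap_mem_sphere _ hR0 θ
  have hmem1 : ∀ ph, cm1 ph ∈ sphere c1 R1 := fun ph => circleMap_mem_sphere _ hR1 ph
  set F : ℝ → ℝ → ℂ := fun θ ph =>
    (circleMap 0 R0 θ * Complex.I * g0 (cm0 θ)) *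
      (circleMap 0 R1 ph * Complex.I * ((cm0 θ - cm1 ph)⁻¹ * h (cm1 ph))) with hF
  have pull : ∀ A B C IN : ℂ, A * (B * (C * IN)) = C * (A * B * IN) := by intros; ring
  have inner1 : ∀ θ : ℝ,
      deriv (circleMap c0 R0) θ • ((fun z => g0 z * cint c1 R1 (fun w => (z - w)⁻¹ * h w))
        (circleMap c0 R0 θ))
      = (2 * Real.pi * Complex.I)⁻¹ * ∫ ph in (0:ℝ)..(2 * Real.pi), F θ ph := by
    intro θ
    simp only [deriv_circleMap, smul_eq_mul]
    unfold cint circleIntegral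
    rw [pull, ← intervalIntegral.integral_const_mul]
    congr 1
    apply intervalIntegral.integral_congr
    intro ph _
    simp only [deriv_circleMap, smul_eq_mul, hF]
    rfl
  have step1 : cint c0 R0 (fun z => g0 z * cint c1 R1 (fun w => (z - w)⁻¹ * h w))
      = (2 * Real.pi * Complex.I)⁻¹ * ((2 * Real.pi * Complex.I)⁻¹ *
          ∫ θ in (0:ℝ)..(2 * Real.pi), ∫ ph in (0:ℝ)..(2 * Real.pi), F θ ph) := by
    have e0 : cint c0 R0 (fun z => g0 z * cint c1 R1 (fun w => (z - w)⁻¹ * h w))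
        = (2 * Real.pi * Complex.I)⁻¹ * ∫ θ in (0:ℝ)..(2 * Real.pi),
            deriv (circleMap c0 R0) θ •
              ((fun z => g0 z * cint c1 R1 (fun w => (z - w)⁻¹ * h w)) (circleMap c0 R0 θ)) := rfl
    rw [e0, intervalIntegral.integral_congr (fun θ _ => inner1 θ),
      intervalIntegral.integral_const_mul]
  rw [step1]
  have hFc : Continuous (Function.uncurry F) := by
    apply Continuous.mul
    · apply Continuous.mul
      · exact ((continuous_circleMap 0 R0).comp continuous_fst).mul continuous_const
      · exact hg0c.comp_continuous ((continuous_circleMap c0 R0).comp continuous_fst)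
          (fun p => hmem0 p.1)
    apply Continuous.mul
    · exact ((continuous_circleMap 0 R1).comp continuous_snd).mul continuous_const
    apply Continuous.mul
    · apply Continuous.inv₀
      · exact (((continuous_circleMap c0 R0).comp continuous_fst)).sub
          ((continuous_circleMap c1 R1).comp continuous_snd)
      · intro p
        intro hzero
        rw [sub_eq_zero] at hzero
        exact hdisj _ (hmem0 p.1) (hzero ▸ hmem1 p.2)
    · exact hh.comp_continuous ((continuous_circleMap c1 R1).comp continuous_snd)
        (fun p => hmem1 p.2)
  rw [swap_int F hFc]
  have hzero : ∀ ph : ℝ, (∫ θ in (0:ℝ)..(2 * Real.pi), F θ ph) = 0 := by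
    intro ph
    have key : (∮ z in C(c0, R0), g0 z * (z - cm1 ph)⁻¹) = 0 := by
      apply circleIntegral_eq_zero_of_differentiable_on_off_countable hR0 Set.countable_empty
      · intro z hz
        have hd : DifferentiableAt ℂ (fun z => g0 z * (z - cm1 ph)⁻¹) z := by
          apply DifferentiableAt.mul (hg0d z hz)
          apply DifferentiableAt.inv
          · exact differentiableAt_id.sub_const _
          · rw [sub_ne_zero]
            intro hzw
            exact hout _ (hmem1 ph) (hzw ▸ hz)
        exact hd.continuousAt.continuousWithinAt
      · intro z hz
        have hz' : z ∈ closedBall c0 R0 := ball_subset_closedBall hz.1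
        apply DifferentiableAt.mul (hg0d z hz')
        apply DifferentiableAt.inv
        · exact differentiableAt_id.sub_const _
        · rw [sub_ne_zero]
          intro hzw
          exact hout _ (hmem1 ph) (hzw ▸ hz')
    have expand : (∫ θ in (0:ℝ)..(2 * Real.pi), F θ ph)
        = (circleMap 0 R1 ph * Complex.I * h (cm1 ph)) *
            (∮ z in C(c0, R0), g0 z * (z - cm1 ph)⁻¹) := by
      simp only [circleIntegral]
      rw [← intervalIntegral.integral_const_mul]
      apply intervalIntegral.integral_congr
      intro θ _
      simp only [deriv_circleMap, smul_eq_mul, hF]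
      ring
    rw [expand, key, mul_zero]
  simp only [hzero]
  simp

lemma absorb (e : ℕ) (G : ℕ → ℂ → ℂ) (z : ℂ) (w : Fin (e+1) → ℂ) :
    chainF (e+1) (fun j => if j = 0 then (fun u => (z - u)⁻¹ * G 0 u) else G j) w
      = (z - w 0)⁻¹ * chainF (e+1) G w := by
  rw [chainF_succ, chainF_succ]
  have hsh : shf (fun j => if j = 0 then (fun u => (z - u)⁻¹ * G 0 u) else G j) = shf G := by
    funext j; simp [shf]
  rw [hsh]
  simp only [↓reduceIte]
  ring

lemma chainZero (k0 : ℕ) : ∀ (d : ℕ) (g : ℕ → ℂ → ℂ) (cc : ℕ → ℂ) (R : ℕ → ℝ),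
    k0 + 2 ≤ d →
    (∀ j, j < d → 0 < R j) →
    (∀ j, j < d → ContinuousOn (g j) (sphere (cc j) (R j))) →
    (∀ j, j + 1 < d → ∀ z ∈ sphere (cc j) (R j), z ∉ sphere (cc (j+1)) (R (j+1))) →
    (∀ z ∈ closedBall (cc k0) (R k0), DifferentiableAt ℂ (g k0) z) →
    (∀ w ∈ sphere (cc (k0+1)) (R (k0+1)), w ∉ closedBall (cc k0) (R k0)) →
    (k0 ≠ 0 → ∀ w ∈ sphere (cc (k0-1)) (R (k0-1)), w ∉ closedBall (cc k0) (R k0)) →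
    multiCintC d (fun t => cc t.1) (fun t => R t.1) (chainF d g) = 0 := by
  induction k0 with
  | zero =>
    intro d g cc R hk hR hg hdisj hdiff houtR _
    obtain ⟨d', rfl⟩ : ∃ d', d = d' + 2 := ⟨d - 2, by omega⟩
    rw [show d' + 2 = (d' + 1) + 1 from rfl, peel_chain]
    have hpsi : ∀ z : ℂ, psiF (d'+1) (shf g) (shf cc) (shf R) z
        = cint (cc 1) (R 1) (fun w => (z - w)⁻¹ * (g 1 w *
            psiF d' (shf (shf g)) (shf (shf cc)) (shf (shf R)) w)) := by
      intro z
      exact psiF_succ d' (shf g) (shf cc) (shf R) z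
    have hfun : (fun z => g 0 z * psiF (d'+1) (shf g) (shf cc) (shf R) z)
        = fun z => g 0 z * cint (cc 1) (R 1) (fun w => (z - w)⁻¹ * (g 1 w *
            psiF d' (shf (shf g)) (shf (shf cc)) (shf (shf R)) w)) := by
      funext z; rw [hpsi z]
    rw [hfun]
    apply swap_cauchy (cc 0) (cc 1) (R 0) (R 1) (hR 0 (by omega)).le (hR 1 (by omega)).le
      (g 0) _ (hdisj 0 (by omega)) (hg 0 (by omega)) ?_ hdiff houtR
    exact ContinuousOn.mul (hg 1 (by omega))
      (psi_contOn d' _ _ _ (fun j hj => (hR (j+2) (by omega)).le)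
        (fun j hj => hg (j+2) (by omega)) (fun j hj => hdisj (j+2) (by omega)) _
        (fun hd' x hx => hdisj 1 (by omega) x hx))
  | succ k0' ih =>
    intro d g cc R hk hR hg hdisj hdiff houtR houtL
    obtain ⟨d', rfl⟩ : ∃ d', d = d' + 1 := ⟨d - 1, by omega⟩
    rw [multiCint_succ_nat]
    apply cint_zero
    intro θ
    set z := circleMap (cc 0) (R 0) θ with hzdef
    have hzmem : z ∈ sphere (cc 0) (R 0) := circleMap_mem_sphere _ (hR 0 (by omega)).le θ
    have hznot1 : z ∉ sphere (cc 1) (R 1) := hdisj 0 (by omega) z hzmem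
    have hrw : (fun w : Fin d' → ℂ => chainF (d'+1) g (Fin.cons z w))
        = fun w => g 0 z * chainF d'
            (fun j => if j = 0 then (fun u => (z - u)⁻¹ * shf g 0 u) else shf g j) w := by
      funext w
      rw [chainF_cons]
      obtain ⟨d'', hd''⟩ : ∃ d'', d' = d'' + 1 := ⟨d' - 1, by omega⟩
      subst hd''
      rw [absorb]
      simp only [cpl]
      ring
    rw [hrw, multiCintC_const_mul]
    set G : ℕ → ℂ → ℂ := fun j => if j = 0 then (fun u => (z - u)⁻¹ * shf g 0 u) else shf g j
      with hG
    have hzero : multiCintC d' (fun t => shf cc t.1) (fun t => shf R t.1) (chainF d' G) = 0 := by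
      apply ih d' G (shf cc) (shf R) (by omega) (fun j hj => hR (j+1) (by omega))
      · intro j hj
        cases j with
        | zero =>
          have : G 0 = fun u => (z - u)⁻¹ * g 1 u := by simp [hG, shf]
          rw [this]
          apply ContinuousOn.mul
          · apply ContinuousOn.inv₀ (continuousOn_const.sub continuousOn_id)
            intro u hu
            simp only [Pi.sub_apply, id_eq, ← hzdef]
            rw [sub_ne_zero]
            intro hzu
            exact hznot1 (hzu ▸ hu)
          · exact hg 1 (by omega)
        | succ j' =>
          have : G (j' + 1) = g (j' + 2) := by simp [hG, shf]
          rw [this]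
          exact hg (j' + 2) (by omega)
      · exact fun j hj => hdisj (j+1) (by omega)
      · cases k0' with
        | zero =>
          have : G 0 = fun u => (z - u)⁻¹ * g 1 u := by simp [hG, shf]
          rw [this]
          intro u hu
          apply DifferentiableAt.mul
          · apply DifferentiableAt.inv (differentiableAt_const z |>.sub differentiableAt_id)
            simp only [Pi.sub_apply, id_eq]
            rw [sub_ne_zero]
            intro hzu
            exact houtL (by omega) z hzmem (hzu ▸ hu)
          · exact hdiff u hu
        | succ t =>
          have : G (t + 1) = g (t + 2) := by simp [hG, shf]
          rw [this]
          exact hdiff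
      · have : G (k0' + 1) = g (k0' + 2) := by simp [hG, shf]
        intro w hw
        exact houtR w hw
      · intro hk0'
        obtain ⟨t, rfl⟩ : ∃ t, k0' = t + 1 := ⟨k0' - 1, by omega⟩
        intro w hw
        exact houtL (by omega) w hw
    rw [hzero, mul_zero]

lemma fext_pos {d : ℕ} (w : Fin d → ℂ) (k : ℕ) (h1 : 1 ≤ k) (h2 : k ≤ d) :
    fext w k = w ⟨k-1, by omega⟩ := by
  simp only [fext]
  rw [dif_pos ⟨h1, h2⟩]

lemma fext_tail {d : ℕ} (w : Fin (d+1) → ℂ) (k : ℕ) (hk : 1 ≤ k) :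
    fext (Fin.tail w) k = fext w (k+1) := by
  by_cases h : k ≤ d
  · rw [fext_pos _ k hk h, fext_pos _ (k+1) (by omega) (by omega)]
    show w (⟨k-1, by omega⟩ : Fin d).succ = _
    congr 1
    ext
    simp
    omega
  · simp only [fext]
    rw [dif_neg (by omega), dif_neg (by omega)]

lemma chainF_eq : ∀ (d : ℕ) (g : ℕ → ℂ → ℂ) (w : Fin d → ℂ),
    chainF d g w = (∏ j ∈ Finset.range d, g j (fext w (j+1))) *
      (∏ j ∈ Finset.range (d-1), (fext w (j+1) - fext w (j+2))⁻¹) := by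
  intro d
  induction d with
  | zero => intro g w; simp [chainF]
  | succ d ihd =>
    intro g w
    cases d with
    | zero =>
      have h0 : chainF 1 g w = g 0 (w 0) := rfl
      rw [h0, Finset.prod_range_one, show (1:ℕ) - 1 = 0 from rfl, Finset.range_zero,
        Finset.prod_empty, mul_one, fext_pos _ 1 le_rfl le_rfl]
      congr 1
    | succ e =>
      show chainF (e + 2) g w = _
      rw [show chainF (e + 2) g w
          = g 0 (w 0) * (w 0 - w 1)⁻¹ * chainF (e+1) (shf g) (Fin.tail w) from rfl]
      rw [ihd (shf g) (Fin.tail w)]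
      have hprod1 : (∏ j ∈ Finset.range (e+1), shf g j (fext (Fin.tail w) (j+1)))
          = ∏ j ∈ Finset.range (e+1), g (j+1) (fext w (j+2)) := by
        apply Finset.prod_congr rfl
        intro j _
        rw [fext_tail _ _ (by omega)]
        rfl
      have hprod2 : (∏ j ∈ Finset.range (e+1-1), (fext (Fin.tail w) (j+1) - fext (Fin.tail w) (j+2))⁻¹)
          = ∏ j ∈ Finset.range e, (fext w (j+2) - fext w (j+3))⁻¹ := by
        apply Finset.prod_congr (by norm_num)
        intro j _
        rw [fext_tail _ _ (by omega), fext_tail _ _ (by omega)]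
      rw [hprod1, hprod2]
      have ht1 : (∏ j ∈ Finset.range (e+2), g j (fext w (j+1)))
          = (∏ j ∈ Finset.range (e+1), g (j+1) (fext w (j+2))) * g 0 (fext w 1) := by
        rw [Finset.prod_range_succ']
      have ht2 : (∏ j ∈ Finset.range (e+2-1), (fext w (j+1) - fext w (j+2))⁻¹)
          = (∏ j ∈ Finset.range e, (fext w (j+2) - fext w (j+3))⁻¹) * (fext w 1 - fext w 2)⁻¹ := by
        have : e + 2 - 1 = e + 1 := rfl
        rw [this, Finset.prod_range_succ']
      rw [ht1, ht2]
      have hw0 : fext w 1 = w 0 := by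
        rw [fext_pos _ 1 le_rfl (by omega)]
        congr 1
      have hw1 : fext w 2 = w 1 := by
        rw [fext_pos _ 2 (by omega) (by omega)]
        congr 1
      rw [hw0, hw1]
      ring

lemma Gfun_diffAt {q : ℝ} (hq1 : q < 1) (nn mm aa : ℤ) {z : ℂ}
    (hz0 : z ≠ 0 ∨ 0 ≤ nn) (hz1 : z ≠ 1) (hzq : z ≠ 1 - (q : ℂ)) :
    DifferentiableAt ℂ (Gfun q nn mm aa) z := by
  have h1q : ((1 : ℂ) - (q : ℝ)) ≠ 0 := by
    intro h
    rw [sub_eq_zero] at h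
    have : (q : ℝ) = 1 := by exact_mod_cast h.symm
    linarith
  have hGfun : Gfun q nn mm aa = fun w =>
      (w ^ nn * (1 - w) ^ (aa + mm) / (1 - w / (1 - (q : ℂ))) ^ mm)
        / Gstar q nn mm aa (1 - (Real.sqrt q : ℂ)) := by
    funext w; rfl
  rw [hGfun]
  apply DifferentiableAt.div_const
  apply DifferentiableAt.div
  · apply DifferentiableAt.mul
    · exact differentiableAt_zpow.mpr (by tauto)
    · have hinner : DifferentiableAt ℂ (fun w : ℂ => (1 : ℂ) - w) z :=
        (differentiableAt_const 1).sub differentiableAt_id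
      have houter : DifferentiableAt ℂ (fun u : ℂ => u ^ (aa + mm)) ((1 : ℂ) - z) :=
        differentiableAt_zpow.mpr (Or.inl (sub_ne_zero.mpr (fun h => hz1 h.symm)))
      exact houter.comp z hinner
  · have hinner : DifferentiableAt ℂ (fun w : ℂ => (1 : ℂ) - w / (1 - (q : ℂ))) z :=
      (differentiableAt_const 1).sub (differentiableAt_id.div_const _)
    have hbase : (1 : ℂ) - z / (1 - (q : ℂ)) ≠ 0 := by
      intro h
      rw [sub_eq_zero] at h
      apply hzq
      field_simp at h
      exact h.symm
    have houter : DifferentiableAt ℂ (fun u : ℂ => u ^ mm) ((1 : ℂ) - z / (1 - (q : ℂ))) :=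
      differentiableAt_zpow.mpr (Or.inl hbase)
    exact houter.comp z hinner
  · apply zpow_ne_zero
    intro h
    rw [sub_eq_zero] at h
    apply hzq
    field_simp at h
    exact h.symm

lemma key (q : ℝ) (hq0 : 0 < q) (hq1 : q < 1) (p : ℕ) (hp : 2 ≤ p)
    (n m : ℕ → ℕ) (a : ℕ → ℤ)
    (hnmono : ∀ t ∈ Finset.Icc 1 (p - 1), n t < n (t + 1))
    (τ1 τ2 : ℝ) (hτ2 : 0 < τ2) (hτ21 : τ2 < τ1) (hτ1 : τ1 < 1 - Real.sqrt q)
    (δ : ℕ → ℕ) (hδ : ∀ t ∈ Finset.Icc 1 p, δ t = 0 ∨ δ t = 1)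
    (ρ : ℕ → ℝ)
    (hρ : ∀ t ∈ Finset.Icc 1 p,
      (δ t = 0 → τ1 < ρ t ∧ ρ t < 1 - Real.sqrt q) ∧
      (δ t = 1 → q < ρ t ∧ ρ t < Real.sqrt q))
    (hord : ∀ t ∈ Finset.Icc 1 (p - 1), δ t = δ (t + 1) → ρ t ≠ ρ (t + 1))
    (k1 : ℕ) (hkp : k1 + 3 ≤ p) (hδk : δ (k1 + 2) = 0)
    (hLa : δ (k1 + 1) = 1 ∨ ρ (k1 + 2) < ρ (k1 + 1))
    (hRa : δ (k1 + 3) = 1 ∨ ρ (k1 + 2) < ρ (k1 + 3))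
    (i j : ℕ) : Ldelta q p n m a τ1 τ2 δ ρ i j = 0 := by
  have hs0 : 0 < Real.sqrt q := Real.sqrt_pos.mpr hq0
  have hsq : Real.sqrt q * Real.sqrt q = q := Real.mul_self_sqrt hq0.le
  have hs1 : Real.sqrt q < 1 := by nlinarith
  have hqs : q < Real.sqrt q := by nlinarith
  have hτ10 : 0 < τ1 := lt_trans hτ2 hτ21
  set s := Real.sqrt q with hsdef
  -- centers and radii, 0-based
  set cc : ℕ → ℂ := fun jj => if δ (jj + 1) = 1 then 1 else 0 with hccdef
  set Rr : ℕ → ℝ := fun jj => ρ (jj + 1) with hRrdef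
  have hmem : ∀ t, 1 ≤ t → t ≤ p → t ∈ Finset.Icc 1 p := by
    intro t h1 h2; simp [Finset.mem_Icc]; omega
  have hρpos : ∀ t, 1 ≤ t → t ≤ p → 0 < ρ t := by
    intro t h1 h2
    rcases hδ t (hmem t h1 h2) with h | h
    · have := ((hρ t (hmem t h1 h2)).1 h).1; linarith
    · have := ((hρ t (hmem t h1 h2)).2 h).1; linarith
  have hρlt : ∀ t, 1 ≤ t → t ≤ p → δ t = 0 → τ1 < ρ t ∧ ρ t < 1 - s := by
    intro t h1 h2 h0; exact (hρ t (hmem t h1 h2)).1 h0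
  have hρlt1 : ∀ t, 1 ≤ t → t ≤ p → δ t = 1 → q < ρ t ∧ ρ t < s := by
    intro t h1 h2 h0; exact (hρ t (hmem t h1 h2)).2 h0
  have hnorm1q : ‖(1 : ℂ) - (q : ℝ)‖ = 1 - q := by
    rw [show (1 : ℂ) - (q : ℝ) = ((1 - q : ℝ) : ℂ) by push_cast; ring]
    rw [Complex.norm_real, Real.norm_eq_abs, abs_of_pos (by linarith)]
  -- basic facts about points on the circles
  have hsph : ∀ jj, jj < p → ∀ w : ℂ, w ∈ Metric.sphere (cc jj) (Rr jj) →
      τ1 < ‖w‖ ∧ w ≠ 1 ∧ w ≠ (1 : ℂ) - (q : ℝ) ∧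
        (δ (jj + 1) = 0 → ‖w‖ = ρ (jj + 1)) ∧ (δ (jj + 1) = 1 → ‖w - 1‖ = ρ (jj + 1)) := by
    intro jj hjj w hw
    rcases hδ (jj + 1) (hmem _ (by omega) (by omega)) with h0 | h1
    · have hc : cc jj = 0 := by simp [hccdef, h0]
      rw [hc, mem_sphere_iff_norm, sub_zero] at hw
      have hb := hρlt (jj + 1) (by omega) (by omega) h0
      refine ⟨by linarith [hw, hb.1], ?_, ?_, fun _ => hw, fun h => by omega⟩
      · intro h; rw [h] at hw; simp at hw; linarith [hb.2]
      · intro h; rw [h] at hw; rw [hnorm1q] at hw; linarith [hb.2]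
    · have hc : cc jj = 1 := by simp [hccdef, h1]
      rw [hc, mem_sphere_iff_norm] at hw
      have hb := hρlt1 (jj + 1) (by omega) (by omega) h1
      have htri : (1 : ℝ) ≤ ‖w‖ + ‖w - 1‖ := by
        have h2 := norm_sub_le w (w - 1)
        have h3 : w - (w - 1) = 1 := by ring
        rw [h3] at h2
        simpa using h2
      refine ⟨by rw [hw] at htri; linarith [hb.2], ?_, ?_, fun h => by omega, fun _ => hw⟩
      · intro h; rw [h] at hw; simp at hw; linarith [hb.1, hq0]
      · intro h
        rw [h] at hw
        rw [show (1 : ℂ) - (q : ℝ) - 1 = -((q : ℝ) : ℂ) by ring] at hw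
        rw [norm_neg, Complex.norm_real, Real.norm_eq_abs, abs_of_pos hq0] at hw
        linarith [hb.1]
  -- disjointness of consecutive circles
  have hdisjt : ∀ jj, jj + 1 < p → ∀ z ∈ Metric.sphere (cc jj) (Rr jj),
      z ∉ Metric.sphere (cc (jj + 1)) (Rr (jj + 1)) := by
    intro jj hjj z hz hz'
    have h1 := hsph jj (by omega) z hz
    have h2 := hsph (jj + 1) (by omega) z hz'
    rcases hδ (jj + 1) (hmem _ (by omega) (by omega)) with ha | ha <;>
      rcases hδ (jj + 2) (hmem _ (by omega) (by omega)) with hb | hb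
    · have e1 := h1.2.2.2.1 ha
      have e2 := h2.2.2.2.1 hb
      have := hord (jj + 1) (by simp [Finset.mem_Icc]; omega) (by rw [ha, hb])
      rw [e1] at e2
      exact this e2
    · -- δ (jj+1) = 0, δ (jj+2) = 1
      have e1 := h1.2.2.2.1 ha
      have e2 := h2.2.2.2.2 hb
      have hb1 := hρlt (jj + 1) (by omega) (by omega) ha
      have hb2 := hρlt1 (jj + 2) (by omega) (by omega) hb
      have htri : (1 : ℝ) ≤ ‖z‖ + ‖z - 1‖ := by
        have h2' := norm_sub_le z (z - 1)
        have h3 : z - (z - 1) = 1 := by ring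
        rw [h3] at h2'
        simpa using h2'
      rw [e1, e2] at htri
      linarith [hb1.2, hb2.2]
    · have e1 := h1.2.2.2.2 ha
      have e2 := h2.2.2.2.1 hb
      have hb1 := hρlt1 (jj + 1) (by omega) (by omega) ha
      have hb2 := hρlt (jj + 2) (by omega) (by omega) hb
      have htri : (1 : ℝ) ≤ ‖z‖ + ‖z - 1‖ := by
        have h2' := norm_sub_le z (z - 1)
        have h3 : z - (z - 1) = 1 := by ring
        rw [h3] at h2'
        simpa using h2'
      rw [e1, e2] at htri
      linarith [hb1.2, hb2.2]
    · have e1 := h1.2.2.2.2 ha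
      have e2 := h2.2.2.2.2 hb
      have := hord (jj + 1) (by simp [Finset.mem_Icc]; omega) (by rw [ha, hb])
      rw [e1] at e2
      exact this e2
  -- the center of circle k1+1 (0-based) is 0
  have hck : cc (k1 + 1) = 0 := by simp [hccdef, hδk]
  have hρk := hρlt (k1 + 2) (by omega) (by omega) hδk
  -- right neighbour out of closed ball
  have houtR' : ∀ w ∈ Metric.sphere (cc (k1 + 2)) (Rr (k1 + 2)),
      w ∉ Metric.closedBall (cc (k1 + 1)) (Rr (k1 + 1)) := by
    intro w hw hmem'
    rw [hck, Metric.mem_closedBall, dist_eq_norm, sub_zero] at hmem'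
    have hf := hsph (k1 + 2) (by omega) w hw
    have hle : ‖w‖ ≤ ρ (k1 + 2) := hmem'
    rcases hδ (k1 + 3) (hmem _ (by omega) (by omega)) with hb | hb
    · have e2 := hf.2.2.2.1 hb
      rw [show k1 + 2 + 1 = k1 + 3 from rfl] at e2
      rcases hRa with hc | hc
      · omega
      · rw [e2] at hle
        linarith
    · have e2 := hf.2.2.2.2 hb
      rw [show k1 + 2 + 1 = k1 + 3 from rfl] at e2
      have hb2 := hρlt1 (k1 + 3) (by omega) (by omega) hb
      have htri : (1 : ℝ) ≤ ‖w‖ + ‖w - 1‖ := by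
        have h2' := norm_sub_le w (w - 1)
        have h3 : w - (w - 1) = 1 := by ring
        rw [h3] at h2'
        simpa using h2'
      rw [e2] at htri
      linarith [hρk.2, hb2.2]
  -- left neighbour out of closed ball
  have houtL' : ∀ w ∈ Metric.sphere (cc k1) (Rr k1),
      w ∉ Metric.closedBall (cc (k1 + 1)) (Rr (k1 + 1)) := by
    intro w hw hmem'
    rw [hck, Metric.mem_closedBall, dist_eq_norm, sub_zero] at hmem'
    have hf := hsph k1 (by omega) w hw
    have hle : ‖w‖ ≤ ρ (k1 + 2) := hmem'
    rcases hδ (k1 + 1) (hmem _ (by omega) (by omega)) with hb | hb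
    · have e2 := hf.2.2.2.1 hb
      rcases hLa with hc | hc
      · omega
      · rw [e2] at hle
        linarith
    · have e2 := hf.2.2.2.2 hb
      have hb2 := hρlt1 (k1 + 1) (by omega) (by omega) hb
      have htri : (1 : ℝ) ≤ ‖w‖ + ‖w - 1‖ := by
        have h2' := norm_sub_le w (w - 1)
        have h3 : w - (w - 1) = 1 := by ring
        rw [h3] at h2'
        simpa using h2'
      rw [e2] at htri
      linarith [hρk.2, hb2.2]
  -- now open up Ldelta
  unfold Ldelta
  apply cint_zero
  intro θ
  apply cint_zero
  intro ph
  set ζ1 : ℂ := circleMap 0 τ1 θ with hζ1def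
  set ζ2 : ℂ := circleMap 0 τ2 ph with hζ2def
  have hζ1 : ‖ζ1‖ = τ1 := by
    have := circleMap_mem_sphere (0 : ℂ) hτ10.le θ
    rwa [mem_sphere_iff_norm, sub_zero] at this
  have hζ2 : ‖ζ2‖ = τ2 := by
    have := circleMap_mem_sphere (0 : ℂ) hτ2.le ph
    rwa [mem_sphere_iff_norm, sub_zero] at this
  set gg : ℕ → ℂ → ℂ := fun jj => fun z =>
    Gfun q ((n (jj + 1) : ℤ) - n jj) ((m (jj + 1) : ℤ) - m jj) (a (jj + 1) - a jj) z
      * (if jj = 0 then (1 - ζ1) * (1 - z)⁻¹ * (z - ζ1)⁻¹ else 1)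
      * (if jj = p - 1 then (z - ζ2)⁻¹ else 1) with hggdef
  set K : ℂ := (Gfun q (i : ℤ) (mOf p n m i : ℤ) (aOf p n a i) ζ1
      * Gfun q ((n p : ℤ) - j + 1) ((m p : ℤ) - mOf p n m j) (a p - aOf p n a j) ζ2)⁻¹
    with hKdef
  -- algebraic identity for the integrand
  have halg : ∀ zv : Fin p → ℂ,
      ((∏ t ∈ Finset.Icc 1 p,
          Gfun q ((n t : ℤ) - n (t - 1)) ((m t : ℤ) - m (t - 1)) (a t - a (t - 1))
            (fext zv t))
        * (∏ t ∈ Finset.Icc 1 (p - 1), (fext zv t - fext zv (t + 1))⁻¹)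
        * ((1 - ζ1) / (1 - fext zv 1)))
      / (Gfun q (i : ℤ) (mOf p n m i : ℤ) (aOf p n a i) ζ1
         * Gfun q ((n p : ℤ) - j + 1) ((m p : ℤ) - mOf p n m j) (a p - aOf p n a j) ζ2
         * ((fext zv 1 - ζ1) * (fext zv p - ζ2)))
      = K * chainF p gg zv := by
    intro zv
    rw [chainF_eq]
    have hP1 : (∏ t ∈ Finset.Icc 1 p,
        Gfun q ((n t : ℤ) - n (t - 1)) ((m t : ℤ) - m (t - 1)) (a t - a (t - 1)) (fext zv t))
        = ∏ jj ∈ Finset.range p,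
            Gfun q ((n (jj + 1) : ℤ) - n jj) ((m (jj + 1) : ℤ) - m jj) (a (jj + 1) - a jj)
              (fext zv (jj + 1)) := by
      rw [← Finset.Ico_add_one_right_eq_Icc, Finset.prod_Ico_eq_prod_range]
      apply Finset.prod_congr (by norm_num)
      intro jj _
      have e1 : 1 + jj = jj + 1 := by omega
      have e2 : 1 + jj - 1 = jj := by omega
      rw [e2, e1]
    have hP2 : (∏ t ∈ Finset.Icc 1 (p - 1), (fext zv t - fext zv (t + 1))⁻¹)
        = ∏ jj ∈ Finset.range (p - 1), (fext zv (jj + 1) - fext zv (jj + 2))⁻¹ := by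
      rw [← Finset.Ico_add_one_right_eq_Icc, Finset.prod_Ico_eq_prod_range]
      apply Finset.prod_congr (by norm_num)
      intro jj _
      have e1 : 1 + jj = jj + 1 := by omega
      rw [e1]
    have hG : (∏ jj ∈ Finset.range p, gg jj (fext zv (jj + 1)))
        = (∏ jj ∈ Finset.range p,
            Gfun q ((n (jj + 1) : ℤ) - n jj) ((m (jj + 1) : ℤ) - m jj) (a (jj + 1) - a jj)
              (fext zv (jj + 1)))
          * ((1 - ζ1) * (1 - fext zv 1)⁻¹ * (fext zv 1 - ζ1)⁻¹)
          * (fext zv p - ζ2)⁻¹ := by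
      rw [hggdef]
      rw [Finset.prod_mul_distrib, Finset.prod_mul_distrib]
      congr 1
      · congr 1
        rw [Finset.prod_ite_eq' (Finset.range p) 0
          (fun jj => (1 - ζ1) * (1 - fext zv (jj + 1))⁻¹ * (fext zv (jj + 1) - ζ1)⁻¹)]
        rw [if_pos (by simp; omega)]
      · rw [Finset.prod_ite_eq' (Finset.range p) (p - 1)
          (fun jj => (fext zv (jj + 1) - ζ2)⁻¹)]
        rw [if_pos (by simp; omega), show p - 1 + 1 = p from by omega]
    rw [hP1, hP2, hG, hKdef]
    simp only [div_eq_mul_inv, mul_inv]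
    ring
  -- rewrite the integrand and conclude
  have hfun : (fun zv : Fin p → ℂ =>
      ((∏ t ∈ Finset.Icc 1 p,
          Gfun q ((n t : ℤ) - n (t - 1)) ((m t : ℤ) - m (t - 1)) (a t - a (t - 1))
            (fext zv t))
        * (∏ t ∈ Finset.Icc 1 (p - 1), (fext zv t - fext zv (t + 1))⁻¹)
        * ((1 - ζ1) / (1 - fext zv 1)))
      / (Gfun q (i : ℤ) (mOf p n m i : ℤ) (aOf p n a i) ζ1
         * Gfun q ((n p : ℤ) - j + 1) ((m p : ℤ) - mOf p n m j) (a p - aOf p n a j) ζ2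
         * ((fext zv 1 - ζ1) * (fext zv p - ζ2))))
      = fun zv => K * chainF p gg zv := funext halg
  rw [hfun, multiCintC_const_mul]
  have hzero : multiCintC p (fun t => cc t.1) (fun t => Rr t.1) (chainF p gg) = 0 := by
    apply chainZero (k1 + 1) p gg cc Rr (by omega)
    · intro jj hjj
      exact hρpos (jj + 1) (by omega) (by omega)
    · -- continuity of gg on the spheres
      intro jj hjj
      intro w hw
      apply ContinuousAt.continuousWithinAt
      have hf := hsph jj hjj w hw
      have hw0 : w ≠ 0 := by
        intro h; rw [h] at hf; simp at hf; linarith [hf.1]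
      apply ContinuousAt.mul
      apply ContinuousAt.mul
      · exact (Gfun_diffAt hq1 _ _ _ (Or.inl hw0) hf.2.1 hf.2.2.1).continuousAt
      · by_cases h0 : jj = 0
        · simp only [h0, if_pos rfl]
          apply ContinuousAt.mul
          apply ContinuousAt.mul continuousAt_const
          · apply ContinuousAt.inv₀ (continuousAt_const.sub continuousAt_id)
            simp only [Pi.sub_apply, id_eq]
            rw [sub_ne_zero]
            intro h
            exact hf.2.1 h.symm
          · apply ContinuousAt.inv₀ (continuousAt_id.sub continuousAt_const)
            rw [Pi.sub_apply, sub_ne_zero]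
            intro h
            simp only [id_eq] at h
            have h2 : ‖w‖ = τ1 := by rw [h]; exact hζ1
            linarith [hf.1]
        · simp only [if_neg h0]
          exact continuousAt_const
      · by_cases h0 : jj = p - 1
        · simp only [h0, if_pos rfl]
          apply ContinuousAt.inv₀ (continuousAt_id.sub continuousAt_const)
          rw [Pi.sub_apply, sub_ne_zero]
          intro h
          simp only [id_eq] at h
          have h2 : ‖w‖ = τ2 := by rw [h]; exact hζ2
          linarith [hf.1, hτ21]
        · simp only [if_neg h0]
          exact continuousAt_const
    · exact hdisjt
    · -- differentiability of gg (k1+1) on the closed ball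
      intro z hz
      rw [hck, Metric.mem_closedBall, dist_eq_norm, sub_zero] at hz
      have hgeq : gg (k1 + 1) = fun z =>
          Gfun q ((n (k1 + 2) : ℤ) - n (k1 + 1)) ((m (k1 + 2) : ℤ) - m (k1 + 1))
            (a (k1 + 2) - a (k1 + 1)) z := by
        funext z
        rw [hggdef]
        simp only [if_neg (by omega : ¬ (k1 + 1 = 0)), if_neg (by omega : ¬ (k1 + 1 = p - 1)),
          mul_one]
      rw [hgeq]
      apply Gfun_diffAt hq1
      · right
        have hmm := hnmono (k1 + 1) (by simp [Finset.mem_Icc]; omega)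
        rw [show k1 + 1 + 1 = k1 + 2 from rfl] at hmm
        omega
      · intro h
        rw [h] at hz
        simp at hz
        linarith [hρk.2, hs1]
      · intro h
        rw [h, hnorm1q] at hz
        linarith [hρk.2, hqs]
    · exact houtR'
    · intro _
      exact houtL'
  rw [hzero, mul_zero]

lemma comb1 (p : ℕ) (hp : 2 ≤ p) (δ e : ℕ → ℕ)
    (hδ : ∀ t ∈ Finset.Icc 1 p, δ t = 0 ∨ δ t = 1)
    (hδne : ∃ t ∈ Finset.Icc 1 p, δ t = 1)
    (he : ∀ t ∈ Finset.Icc 1 (p - 1), e t = 1 ∨ e t = 2)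
    (hni : ¬ ∃ k1 k2 : ℕ, k1 < k2 ∧ k2 ≤ p ∧
      ∀ t ∈ Finset.Icc 1 p, (δ t = 1 ↔ (k1 < t ∧ t ≤ k2))) :
    ∃ k, 2 ≤ k ∧ k + 1 ≤ p ∧ δ k = 0 ∧
      (δ (k - 1) = 1 ∨ (δ (k - 1) = 0 ∧ e (k - 1) = 1)) ∧
      (δ (k + 1) = 1 ∨ (δ (k + 1) = 0 ∧ e k = 2)) := by
  classical
  obtain ⟨s0, hs0mem, hs0⟩ := hδne
  rw [Finset.mem_Icc] at hs0mem
  -- least index with δ = 1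
  have hex : ∃ t, δ t = 1 ∧ 1 ≤ t := ⟨s0, hs0, hs0mem.1⟩
  set sm := Nat.find hex with hsm
  have hsmspec : δ sm = 1 ∧ 1 ≤ sm := Nat.find_spec hex
  have hsmle : sm ≤ s0 := Nat.find_min' hex ⟨hs0, hs0mem.1⟩
  have hsmmin : ∀ t, t < sm → ¬(δ t = 1 ∧ 1 ≤ t) := fun t ht => Nat.find_min hex ht
  -- greatest index ≤ p with δ = 1
  set um := Nat.findGreatest (fun t => δ t = 1) p with hum
  have humspec : δ um = 1 := Nat.findGreatest_spec (P := fun t => δ t = 1) (m := s0) hs0mem.2 hs0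
  have humle : um ≤ p := Nat.findGreatest_le p
  have humge : ∀ t, t ≤ p → δ t = 1 → t ≤ um := fun t htp ht =>
    Nat.le_findGreatest (P := fun t => δ t = 1) htp ht
  have hsmum : sm ≤ um := humge sm (le_trans hsmle hs0mem.2) hsmspec.1
  have hsm1 : 1 ≤ sm := hsmspec.2
  -- there must be a zero strictly between sm and um
  by_cases hz : ∃ t, sm < t ∧ t < um ∧ δ t = 0
  · obtain ⟨t, hst, htu, ht0⟩ := hz
    -- last 1 before t
    set lm := Nat.findGreatest (fun x => δ x = 1) t with hlm
    have hlmspec : δ lm = 1 := Nat.findGreatest_spec (P := fun t => δ t = 1) (m := sm) (le_of_lt hst) hsmspec.1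
    have hlmle : lm ≤ t := Nat.findGreatest_le t
    have hlmge : sm ≤ lm := Nat.le_findGreatest (P := fun t => δ t = 1) (le_of_lt hst) hsmspec.1
    have hlmne : lm ≠ t := fun h => by rw [h, ht0] at hlmspec; omega
    have hlmlt : lm < t := lt_of_le_of_ne hlmle hlmne
    have hlmmax : ∀ x, lm < x → x ≤ t → δ x ≠ 1 := fun x hx hxt =>
      Nat.findGreatest_is_greatest (P := fun x => δ x = 1) hx hxt
    -- first 1 after t
    have hex2 : ∃ jx, δ (t + jx) = 1 := ⟨um - t, by rw [show t + (um - t) = um from by omega]; exact humspec⟩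
    set f2 := Nat.find hex2 with hf2
    set rm := t + f2 with hrm
    have hrmspec : δ rm = 1 := Nat.find_spec hex2
    have hrmle : rm ≤ um := by
      have : f2 ≤ um - t := Nat.find_min' hex2 (by rw [show t + (um - t) = um from by omega]; exact humspec)
      omega
    have hrmne : rm ≠ t := fun h => by rw [h, ht0] at hrmspec; omega
    have hrmgt : t < rm := by
      rcases Nat.lt_or_ge t rm with h | h
      · exact h
      · exfalso; apply hrmne; omega
    have hrmmin : ∀ x, t ≤ x → x < rm → δ x ≠ 1 := by
      intro x hx1 hx2 hx3
      have : δ (t + (x - t)) = 1 := by rw [show t + (x - t) = x from by omega]; exact hx3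
      exact Nat.find_min hex2 (by omega) this
    -- zeros on (lm, rm)
    have hzero : ∀ x, lm < x → x < rm → δ x = 0 := by
      intro x hx1 hx2
      have hxp : x ∈ Finset.Icc 1 p := by
        rw [Finset.mem_Icc]
        constructor
        · omega
        · omega
      rcases hδ x hxp with h | h
      · exact h
      · exfalso
        rcases Nat.lt_or_ge t x with hc | hc
        · exact hrmmin x (by omega) hx2 h
        · exact hlmmax x hx1 hc h
    -- choose k
    have hex3 : ∃ jx, lm + 1 + jx = rm - 1 ∨ e (lm + 1 + jx) = 2 :=
      ⟨rm - 1 - (lm + 1), Or.inl (by omega)⟩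
    set f3 := Nat.find hex3 with hf3
    set k := lm + 1 + f3 with hk
    have hkspec : k = rm - 1 ∨ e k = 2 := Nat.find_spec hex3
    have hkle : k ≤ rm - 1 := by
      have : f3 ≤ rm - 1 - (lm + 1) := Nat.find_min' hex3 (Or.inl (by omega))
      omega
    have hkmin : ∀ jx, jx < f3 → ¬(lm + 1 + jx = rm - 1 ∨ e (lm + 1 + jx) = 2) :=
      fun jx hjx => Nat.find_min hex3 hjx
    refine ⟨k, by omega, by omega, hzero k (by omega) (by omega), ?_, ?_⟩
    · rcases Nat.eq_zero_or_pos f3 with h | h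
      · left
        rw [show k - 1 = lm from by omega]
        exact hlmspec
      · right
        obtain ⟨f4, hf4⟩ : ∃ f4, f3 = f4 + 1 := ⟨f3 - 1, by omega⟩
        have := hkmin f4 (by omega)
        push_neg at this
        have he1 : e (lm + 1 + f4) = 1 := by
          rcases he (lm + 1 + f4) (by rw [Finset.mem_Icc]; omega) with h | h
          · exact h
          · exact absurd h this.2
        constructor
        · exact hzero (k - 1) (by omega) (by omega)
        · rw [show k - 1 = lm + 1 + f4 from by omega]
          exact he1
    · by_cases hrmcase : k = rm - 1
      · left
        rw [show k + 1 = rm from by omega]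
        exact hrmspec
      · rcases hkspec with h | h
        · exact absurd h hrmcase
        · right
          refine ⟨hzero (k + 1) (by omega) (by omega), h⟩
  · -- no zero between: the ones form an interval, contradiction
    exfalso
    apply hni
    push_neg at hz
    refine ⟨sm - 1, um, by omega, humle, ?_⟩
    intro t htmem
    rw [Finset.mem_Icc] at htmem
    constructor
    · intro ht1
      constructor
      · by_contra hcon
        push_neg at hcon
        have : t < sm := by omega
        exact hsmmin t this ⟨ht1, htmem.1⟩
      · exact humge t htmem.2 ht1
    · rintro ⟨h1, h2⟩
      rcases Nat.lt_or_ge t um with hc | hc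
      · rcases Nat.lt_or_ge sm t with hc2 | hc2
        · have := hz t hc2 hc
          rcases hδ t (by rw [Finset.mem_Icc]; omega) with h | h
          · omega
          · exact h
        · have : t = sm := by omega
          rw [this]; exact hsmspec.1
      · have : t = um := by omega
        rw [this]; exact humspec

lemma comb2 (p : ℕ) (hp : 2 ≤ p) (δ e : ℕ → ℕ)
    (hδ : ∀ t ∈ Finset.Icc 1 p, δ t = 0 ∨ δ t = 1)
    (he : ∀ t ∈ Finset.Icc 1 (p - 1), e t = 1 ∨ e t = 2)
    (k1 k2 : ℕ) (hk12 : k1 < k2) (hk2p : k2 ≤ p)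
    (hiv : ∀ t ∈ Finset.Icc 1 p, (δ t = 1 ↔ (k1 < t ∧ t ≤ k2)))
    (hbad : ¬ ((∀ t : ℕ, 1 ≤ t → t < k1 → e t = 2) ∧
           (∀ t : ℕ, k2 < t → t ≤ p - 1 → e t = 1))) :
    ∃ k, 2 ≤ k ∧ k + 1 ≤ p ∧ δ k = 0 ∧
      (δ (k - 1) = 1 ∨ (δ (k - 1) = 0 ∧ e (k - 1) = 1)) ∧
      (δ (k + 1) = 1 ∨ (δ (k + 1) = 0 ∧ e k = 2)) := by
  classical
  have hδ0 : ∀ t, 1 ≤ t → t ≤ p → ¬(k1 < t ∧ t ≤ k2) → δ t = 0 := by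
    intro t h1 h2 h3
    rcases hδ t (by rw [Finset.mem_Icc]; omega) with h | h
    · exact h
    · exact absurd ((hiv t (by rw [Finset.mem_Icc]; omega)).1 h) h3
  have hδ1 : ∀ t, 1 ≤ t → t ≤ p → k1 < t → t ≤ k2 → δ t = 1 := by
    intro t h1 h2 h3 h4
    exact (hiv t (by rw [Finset.mem_Icc]; omega)).2 ⟨h3, h4⟩
  rw [not_and_or] at hbad
  rcases hbad with hbad | hbad
  · -- some e t = 1 with 1 ≤ t < k1
    push_neg at hbad
    obtain ⟨t, ht1, htk1, hte⟩ := hbad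
    have hte1 : e t = 1 := by
      rcases he t (by rw [Finset.mem_Icc]; omega) with h | h
      · exact h
      · exact absurd h hte
    -- greatest x in [2, k1] with e (x-1) = 1
    have hex : ∃ x, (2 ≤ x ∧ e (x - 1) = 1) ∧ x ≤ k1 := ⟨t + 1, ⟨by omega, by simpa using hte1⟩, by omega⟩
    set k := Nat.findGreatest (fun x => 2 ≤ x ∧ e (x - 1) = 1) k1 with hkk
    have hkspec : 2 ≤ k ∧ e (k - 1) = 1 :=
      Nat.findGreatest_spec (P := fun x => 2 ≤ x ∧ e (x - 1) = 1) (m := t + 1) (by omega)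
        ⟨by omega, by simpa using hte1⟩
    have hkle : k ≤ k1 := Nat.findGreatest_le k1
    have hkmax : ∀ x, k < x → x ≤ k1 → ¬(2 ≤ x ∧ e (x - 1) = 1) := fun x hx hxk1 =>
      Nat.findGreatest_is_greatest (P := fun x => 2 ≤ x ∧ e (x - 1) = 1) hx hxk1
    refine ⟨k, hkspec.1, by omega, hδ0 k (by omega) (by omega) (by omega), ?_, ?_⟩
    · right
      exact ⟨hδ0 (k - 1) (by omega) (by omega) (by omega), hkspec.2⟩
    · rcases Nat.lt_or_ge k k1 with hc | hc
      · right
        refine ⟨hδ0 (k + 1) (by omega) (by omega) (by omega), ?_⟩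
        have := hkmax (k + 1) (by omega) (by omega)
        push_neg at this
        have h2 := this (by omega)
        rcases he k (by rw [Finset.mem_Icc]; omega) with h | h
        · exfalso; apply h2; simpa using h
        · exact h
      · left
        have hkeq : k = k1 := by omega
        exact hδ1 (k + 1) (by omega) (by omega) (by omega) (by omega)
  · -- some e t = 2 with k2 < t ≤ p - 1
    push_neg at hbad
    obtain ⟨t, htk2, htp, hte⟩ := hbad
    have hte2 : e t = 2 := by
      rcases he t (by rw [Finset.mem_Icc]; omega) with h | h
      · exact absurd h hte
      · exact h
    have hex : ∃ jx, e (k2 + 1 + jx) = 2 := ⟨t - (k2 + 1), by rw [show k2 + 1 + (t - (k2+1)) = t from by omega]; exact hte2⟩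
    set f := Nat.find hex with hf
    set k := k2 + 1 + f with hkk
    have hkspec : e k = 2 := Nat.find_spec hex
    have hkle : k ≤ t := by
      have : f ≤ t - (k2 + 1) := Nat.find_min' hex (by rw [show k2 + 1 + (t - (k2+1)) = t from by omega]; exact hte2)
      omega
    have hkmin : ∀ jx, jx < f → e (k2 + 1 + jx) ≠ 2 := fun jx hjx => Nat.find_min hex hjx
    have hk2pos : 1 ≤ k2 := by omega
    refine ⟨k, by omega, by omega, hδ0 k (by omega) (by omega) (by omega), ?_, ?_⟩
    · rcases Nat.eq_zero_or_pos f with h | h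
      · left
        rw [show k - 1 = k2 from by omega]
        exact hδ1 k2 (by omega) (by omega) (by omega) (by omega)
      · right
        obtain ⟨f4, hf4⟩ : ∃ f4, f = f4 + 1 := ⟨f - 1, by omega⟩
        have hne2 := hkmin f4 (by omega)
        have he1 : e (k2 + 1 + f4) = 1 := by
          rcases he (k2 + 1 + f4) (by rw [Finset.mem_Icc]; omega) with h | h
          · exact h
          · exact absurd h hne2
        refine ⟨hδ0 (k - 1) (by omega) (by omega) (by omega), ?_⟩
        rw [show k - 1 = k2 + 1 + f4 from by omega]
        exact he1
    · right
      exact ⟨hδ0 (k + 1) (by omega) (by omega) (by omega), hkspec⟩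

end S11

/-- (Lemma `lem:deltanonzero` of the paper.)  For `δ` not identically
zero, `L^ε_δ ≡ 0` unless the set `{k : δ_k = 1}` is an interval `(k_1, k_2]`; and when
it is such an interval, `L^ε_δ ≡ 0` unless `ε_1 = … = ε_{k_1−1} = 2` and
`ε_{k_2+1} = … = ε_{p−1} = 1`. -/
theorem statement11
    (q : ℝ) (hq0 : 0 < q) (hq1 : q < 1)
    (p N : ℕ) (hp : 2 ≤ p)
    (n : ℕ → ℕ) (hn0 : n 0 = 0) (hn1 : 1 ≤ n 1)
    (hnmono : ∀ k ∈ Finset.Icc 1 (p - 1), n k < n (k + 1)) (hnp : n p = N)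
    (m : ℕ → ℕ) (hm0 : m 0 = 0) (hm1 : 0 < m 1)
    (hmmono : ∀ k ∈ Finset.Icc 1 (p - 1), m k < m (k + 1))
    (a : ℕ → ℤ) (ha0 : a 0 = 0)
    (e : ℕ → ℕ) (he : ∀ k ∈ Finset.Icc 1 (p - 1), e k = 1 ∨ e k = 2)
    (δ : ℕ → ℕ) (hδ : ∀ k ∈ Finset.Icc 1 p, δ k = 0 ∨ δ k = 1)
    (hδne : ∃ k ∈ Finset.Icc 1 p, δ k = 1)
    (τ1 τ2 : ℝ) (hτ2 : 0 < τ2) (hτ21 : τ2 < τ1) (hτ1 : τ1 < 1 - Real.sqrt q)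
    (ρ : ℕ → ℝ)
    (hρ : ∀ k ∈ Finset.Icc 1 p,
      (δ k = 0 → τ1 < ρ k ∧ ρ k < 1 - Real.sqrt q) ∧
      (δ k = 1 → q < ρ k ∧ ρ k < Real.sqrt q))
    (hρord : ∀ k ∈ Finset.Icc 1 (p - 1), δ k = δ (k + 1) →
      (e k = 2 → ρ k < ρ (k + 1)) ∧ (e k = 1 → ρ (k + 1) < ρ k)) :
    ((¬ ∃ k1 k2 : ℕ, k1 < k2 ∧ k2 ≤ p ∧
        ∀ k ∈ Finset.Icc 1 p, (δ k = 1 ↔ (k1 < k ∧ k ≤ k2))) →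
      ∀ i j : ℕ, 1 ≤ i → i ≤ N → 1 ≤ j → j ≤ N →
        Ldelta q p n m a τ1 τ2 δ ρ i j = 0)
    ∧ (∀ k1 k2 : ℕ, k1 < k2 → k2 ≤ p →
        (∀ k ∈ Finset.Icc 1 p, (δ k = 1 ↔ (k1 < k ∧ k ≤ k2))) →
        ¬ ((∀ t : ℕ, 1 ≤ t → t < k1 → e t = 2) ∧
           (∀ t : ℕ, k2 < t → t ≤ p - 1 → e t = 1)) →
        ∀ i j : ℕ, 1 ≤ i → i ≤ N → 1 ≤ j → j ≤ N →
          Ldelta q p n m a τ1 τ2 δ ρ i j = 0) := by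
  have hord : ∀ t ∈ Finset.Icc 1 (p - 1), δ t = δ (t + 1) → ρ t ≠ ρ (t + 1) := by
    intro t ht hdd
    rcases he t ht with h | h
    · have h2 := (hρord t ht hdd).2 h
      intro hc; rw [hc] at h2; exact lt_irrefl _ h2
    · have h2 := (hρord t ht hdd).1 h
      intro hc; rw [hc] at h2; exact lt_irrefl _ h2
  have main : ∀ k, 2 ≤ k → k + 1 ≤ p → δ k = 0 →
      (δ (k - 1) = 1 ∨ (δ (k - 1) = 0 ∧ e (k - 1) = 1)) →
      (δ (k + 1) = 1 ∨ (δ (k + 1) = 0 ∧ e k = 2)) →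
      ∀ i j : ℕ, Ldelta q p n m a τ1 τ2 δ ρ i j = 0 := by
    intro k hk2 hkp hδk hLe hRe i j
    obtain ⟨k1, rfl⟩ : ∃ k1, k = k1 + 2 := ⟨k - 2, by omega⟩
    have hsub : k1 + 2 - 1 = k1 + 1 := by omega
    apply S11.key q hq0 hq1 p hp n m a hnmono τ1 τ2 hτ2 hτ21 hτ1 δ hδ ρ hρ hord k1 (by omega)
      hδk ?_ ?_
    · rcases hLe with h | ⟨h0, h1⟩
      · left; rw [hsub] at h; exact h
      · right
        rw [hsub] at h0 h1
        have h2 := (hρord (k1 + 1) (by simp [Finset.mem_Icc]; omega)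
          (by rw [h0, show k1 + 1 + 1 = k1 + 2 from rfl, hδk])).2 h1
        rw [show k1 + 1 + 1 = k1 + 2 from rfl] at h2
        exact h2
    · rcases hRe with h | ⟨h0, h1⟩
      · left; exact h
      · right
        have h2 := (hρord (k1 + 2) (by simp [Finset.mem_Icc]; omega)
          (by rw [hδk, h0])).1 h1
        exact h2
  constructor
  · intro hni i j _ _ _ _
    obtain ⟨k, h1, h2, h3, h4, h5⟩ := S11.comb1 p hp δ e hδ hδne he hni
    exact main k h1 h2 h3 h4 h5 i j
  · intro k1 k2 hk12 hk2p hiv hbad i j _ _ _ _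
    obtain ⟨k, h1, h2, h3, h4, h5⟩ := S11.comb2 p hp δ e hδ he k1 k2 hk12 hk2p hiv hbad
    exact main k h1 h2 h3 h4 h5 i j

end
end

section
/- For every 1 ≤ k ≤ p and all 1 ≤ i, j ≤ N: L_k(i,j) − L_{k−1}(i,j) = 1{ i, j ∈ (n_{k−1}, n_k] } · 1{i = j} + 1{ i ∈ (n_{k−1}, n_k], j ≤ n_{min{k−1, p−2}} } · B(i,j) + 1{ i > n_k, j ≤ n_k, k ≤ p−2 } · L_k(i,j) − 1{ i > n_{k−1}, j ≤ n_{k−1}, k ≤ p−1 } · L_{k−1}(i,j). -/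
open MeasureTheory ProbabilityTheory Complex
open scoped Real BigOperators Nat

noncomputable section

/-- The kernel `L_k(i,j)` (Definition `def:Lk` of the paper), with `L_0 = 0`. -/
def Lker (q : ℝ) (p : ℕ) (n m : ℕ → ℕ) (a : ℕ → ℤ) (τ1 τ2 : ℝ) (k i j : ℕ) : ℂ :=
  if k = 0 then 0 else
    (1 - (Real.sqrt q : ℂ))⁻¹ *
      cint 0 τ1 (fun ζ1 => cint 0 τ2 (fun ζ2 =>
        Gfun q ((n k : ℤ) - i) ((m k : ℤ) - mOf p n m i) (a k - aOf p n a i) ζ1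
        / (Gfun q ((n k : ℤ) - j + 1) ((m k : ℤ) - mOf p n m j) (a k - aOf p n a j) ζ2
           * (ζ1 - ζ2))))

/-- The kernel `B(i,j)` of Lemma `lem:Lkhelper` of the paper. -/
def Bker (q : ℝ) (p : ℕ) (n m : ℕ → ℕ) (a : ℕ → ℤ) (τ : ℝ) (i j : ℕ) : ℂ :=
  (1 - (Real.sqrt q : ℂ))⁻¹ *
    cint 0 τ (fun w =>
      (Gfun q ((i : ℤ) - j + 1) ((mOf p n m i : ℤ) - mOf p n m j)
        (aOf p n a i - aOf p n a j) w)⁻¹)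

namespace Stmt15
open Metric Set

variable {q : ℝ}

lemma sqrt_lt_one' (hq0 : 0 < q) (hq1 : q < 1) : Real.sqrt q < 1 := by
  nlinarith [Real.sq_sqrt hq0.le, Real.sqrt_nonneg q]

lemma q_lt_sqrt (hq0 : 0 < q) (hq1 : q < 1) : q < Real.sqrt q := by
  nlinarith [Real.sq_sqrt hq0.le, Real.sqrt_nonneg q, Real.sqrt_pos.mpr hq0]

lemma rho_pos (hq0 : 0 < q) (hq1 : q < 1) : 0 < 1 - Real.sqrt q := by
  have := sqrt_lt_one' hq0 hq1; linarith

lemma rho_lt (hq0 : 0 < q) (hq1 : q < 1) : 1 - Real.sqrt q < 1 - q := by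
  have := q_lt_sqrt hq0 hq1; linarith

/-- the three "base" nonvanishing facts for points in the ball of radius `1 - q`. -/
lemma base1_ne {z : ℂ} (hq0 : 0 < q) (hq1 : q < 1) (hz : ‖z‖ < 1 - q) : (1 : ℂ) - z ≠ 0 := by
  intro h
  have : z = 1 := by linear_combination -h
  rw [this] at hz; simp at hz; linarith

lemma baseq_ne {z : ℂ} (hq1 : q < 1) (hz : ‖z‖ < 1 - q) :
    (1 : ℂ) - z / (1 - (q : ℂ)) ≠ 0 := by
  have h1q : (1 : ℂ) - (q : ℂ) ≠ 0 := by
    intro h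
    have : (q : ℂ) = 1 := by linear_combination -h
    have : q = 1 := by exact_mod_cast this
    linarith
  intro h
  have hz1 : z = 1 - (q : ℂ) := by
    field_simp at h; linear_combination -h
  rw [hz1] at hz
  have : ‖(1 : ℂ) - (q : ℂ)‖ = 1 - q := by
    rw [show (1 : ℂ) - (q : ℂ) = ((1 - q : ℝ) : ℂ) by push_cast; ring,
      Complex.norm_real]
    exact abs_of_pos (by linarith)
  rw [this] at hz; linarith

lemma w0_norm (hq0 : 0 < q) (hq1 : q < 1) :
    ‖(1 : ℂ) - (Real.sqrt q : ℂ)‖ = 1 - Real.sqrt q := by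
  rw [show (1 : ℂ) - (Real.sqrt q : ℂ) = ((1 - Real.sqrt q : ℝ) : ℂ) by push_cast; ring,
    Complex.norm_real]
  exact abs_of_pos (by have := sqrt_lt_one' hq0 hq1; linarith)

lemma w0_ne (hq0 : 0 < q) (hq1 : q < 1) : (1 : ℂ) - (Real.sqrt q : ℂ) ≠ 0 := by
  intro h
  have := w0_norm hq0 hq1
  rw [h] at this; simp at this
  have h2 := sqrt_lt_one' hq0 hq1; linarith

lemma w0_norm_lt (hq0 : 0 < q) (hq1 : q < 1) :
    ‖(1 : ℂ) - (Real.sqrt q : ℂ)‖ < 1 - q := by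
  rw [w0_norm hq0 hq1]; have := q_lt_sqrt hq0 hq1; linarith

/-- unconditional inverse identity -/
lemma gstar_inv (q : ℝ) (n m a : ℤ) (z : ℂ) :
    (Gstar q n m a z)⁻¹ = Gstar q (-n) (-m) (-a) z := by
  simp only [Gstar, show -a + -m = -(a + m) by ring, zpow_neg, div_eq_mul_inv, mul_inv, inv_inv]

lemma gfun_inv (q : ℝ) (n m a : ℤ) (z : ℂ) :
    (Gfun q n m a z)⁻¹ = Gfun q (-n) (-m) (-a) z := by
  simp only [Gfun, div_eq_mul_inv, mul_inv, inv_inv, gstar_inv]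

lemma gstar_mul {z : ℂ} (hz0 : z ≠ 0) (hz1 : (1 : ℂ) - z ≠ 0)
    (hzq : (1 : ℂ) - z / (1 - (q : ℂ)) ≠ 0) (n1 m1 a1 n2 m2 a2 : ℤ) :
    Gstar q n1 m1 a1 z * Gstar q n2 m2 a2 z = Gstar q (n1 + n2) (m1 + m2) (a1 + a2) z := by
  simp only [Gstar, show a1 + a2 + (m1 + m2) = (a1 + m1) + (a2 + m2) by ring,
    zpow_add₀ hz0, zpow_add₀ hz1, zpow_add₀ hzq]
  field_simp

lemma w0_base1_ne (hq0 : 0 < q) (hq1 : q < 1) :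
    (1 : ℂ) - ((1 : ℂ) - (Real.sqrt q : ℂ)) ≠ 0 := by
  have := base1_ne hq0 hq1 (w0_norm_lt hq0 hq1); exact this

lemma w0_baseq_ne (hq0 : 0 < q) (hq1 : q < 1) :
    (1 : ℂ) - ((1 : ℂ) - (Real.sqrt q : ℂ)) / (1 - (q : ℂ)) ≠ 0 :=
  baseq_ne hq1 (w0_norm_lt hq0 hq1)

lemma gstar_w0_ne (hq0 : 0 < q) (hq1 : q < 1) (n m a : ℤ) :
    Gstar q n m a (1 - (Real.sqrt q : ℂ)) ≠ 0 := by
  unfold Gstar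
  exact div_ne_zero (mul_ne_zero (zpow_ne_zero _ (w0_ne hq0 hq1))
    (zpow_ne_zero _ (w0_base1_ne hq0 hq1))) (zpow_ne_zero _ (w0_baseq_ne hq0 hq1))

lemma gfun_mul (hq0 : 0 < q) (hq1 : q < 1) {z : ℂ} (hz0 : z ≠ 0) (hz : ‖z‖ < 1 - q)
    (n1 m1 a1 n2 m2 a2 : ℤ) :
    Gfun q n1 m1 a1 z * Gfun q n2 m2 a2 z = Gfun q (n1 + n2) (m1 + m2) (a1 + a2) z := by
  unfold Gfun
  rw [div_mul_div_comm, gstar_mul hz0 (base1_ne hq0 hq1 hz) (baseq_ne hq1 hz),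
    gstar_mul (w0_ne hq0 hq1) (w0_base1_ne hq0 hq1) (w0_baseq_ne hq0 hq1)]

lemma gfun_w0_pure (q : ℝ) (d : ℤ) (z : ℂ) :
    Gfun q d 0 0 z = ((1 - (Real.sqrt q : ℂ)) ^ d)⁻¹ * z ^ d := by
  unfold Gfun Gstar
  simp [div_eq_mul_inv, mul_comm]

lemma gstar_differentiableAt (hq0 : 0 < q) (hq1 : q < 1) {n m a : ℤ} {z : ℂ}
    (hz : ‖z‖ < 1 - q) (hn : z ≠ 0 ∨ 0 ≤ n) :
    DifferentiableAt ℂ (fun w => Gstar q n m a w) z := by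
  have h1 : DifferentiableAt ℂ (fun w : ℂ => w ^ n) z := differentiableAt_zpow.mpr hn
  have h2 : DifferentiableAt ℂ (fun w : ℂ => (1 - w) ^ (a + m)) z := by
    have hbase : (1 : ℂ) - z ≠ 0 := base1_ne hq0 hq1 hz
    exact (differentiableAt_zpow.mpr (Or.inl hbase)).comp z
      ((differentiableAt_const (1 : ℂ)).sub differentiableAt_id)
  have h3 : DifferentiableAt ℂ (fun w : ℂ => (1 - w / (1 - (q : ℂ))) ^ m) z := by
    have hbase : (1 : ℂ) - z / (1 - (q : ℂ)) ≠ 0 := baseq_ne hq1 hz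
    exact (differentiableAt_zpow.mpr (Or.inl hbase)).comp z
      ((differentiableAt_const (1 : ℂ)).sub (differentiableAt_id.div_const _))
  have h3ne : (1 - z / (1 - (q : ℂ))) ^ m ≠ 0 := zpow_ne_zero _ (baseq_ne hq1 hz)
  exact (h1.mul h2).div h3 h3ne

lemma gfun_differentiableAt (hq0 : 0 < q) (hq1 : q < 1) {n m a : ℤ} {z : ℂ}
    (hz : ‖z‖ < 1 - q) (hn : z ≠ 0 ∨ 0 ≤ n) :
    DifferentiableAt ℂ (fun w => Gfun q n m a w) z := by
  unfold Gfun
  exact (gstar_differentiableAt hq0 hq1 hz hn).div_const _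

lemma gfun_diffOn (hq0 : 0 < q) (hq1 : q < 1) {n : ℤ} (hn : 0 ≤ n) (m a : ℤ) :
    DifferentiableOn ℂ (fun w => Gfun q n m a w) (Metric.ball 0 (1 - q)) := fun z hz =>
  (gfun_differentiableAt hq0 hq1 (by simpa using hz) (Or.inr hn)).differentiableWithinAt

lemma gfun_diffOn_punct (hq0 : 0 < q) (hq1 : q < 1) (n m a : ℤ) :
    DifferentiableOn ℂ (fun w => Gfun q n m a w) (Metric.ball 0 (1 - q) \ {0}) := fun z hz =>
  (gfun_differentiableAt hq0 hq1 (by simpa using hz.1) (Or.inl hz.2)).differentiableWithinAt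

lemma gfun_contOn_sphere (hq0 : 0 < q) (hq1 : q < 1) {r : ℝ} (hr0 : 0 < r)
    (hr : r < 1 - q) (n m a : ℤ) :
    ContinuousOn (fun w => Gfun q n m a w) (Metric.sphere 0 r) := by
  intro z hz
  have hz' : ‖z‖ = r := by simpa using hz
  have : z ≠ 0 := by intro h; rw [h] at hz'; simp at hz'; linarith
  exact (gfun_differentiableAt hq0 hq1 (by rw [hz']; exact hr)
    (Or.inl this)).continuousAt.continuousWithinAt
lemma two_pi_I_ne : (2 * (Real.pi : ℂ) * Complex.I) ≠ 0 := by
  simp [Real.pi_ne_zero, Complex.I_ne_zero]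

lemma cint_congr {c : ℂ} {R : ℝ} (hR : 0 ≤ R) {f g : ℂ → ℂ}
    (h : EqOn f g (sphere c R)) : cint c R f = cint c R g := by
  unfold cint; rw [circleIntegral.integral_congr hR h]

lemma cint_zero (c : ℂ) (R : ℝ) : cint c R (fun _ => 0) = 0 := by
  unfold cint circleIntegral; simp

lemma cint_const_mul (a : ℂ) (c : ℂ) (R : ℝ) (f : ℂ → ℂ) :
    cint c R (fun z => a * f z) = a * cint c R f := by
  unfold cint; rw [circleIntegral.integral_const_mul]; ring

lemma cint_eq_zero_of_diff {r R : ℝ} (h0 : 0 ≤ r) (hrR : r < R) {f : ℂ → ℂ}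
    (hd : DifferentiableOn ℂ f (ball (0 : ℂ) R)) : cint 0 r f = 0 := by
  unfold cint
  rw [circleIntegral_eq_zero_of_differentiable_on_off_countable h0 countable_empty
    (hd.continuousOn.mono ((closedBall_subset_ball hrR)))
    (fun z hz => hd.differentiableAt (isOpen_ball.mem_nhds (ball_subset_ball hrR.le hz.1))),
    mul_zero]

lemma cint_cauchy {R : ℝ} {w : ℂ} {f : ℂ → ℂ}
    (hd : DifferentiableOn ℂ f (closedBall (0 : ℂ) R)) (hw : w ∈ ball (0 : ℂ) R) :
    cint 0 R (fun z => (z - w)⁻¹ * f z) = f w := by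
  unfold cint
  have := hd.circleIntegral_sub_inv_smul hw
  simp only [smul_eq_mul] at this
  rw [this, ← mul_assoc, inv_mul_cancel₀ two_pi_I_ne, one_mul]

lemma cint_annulus {r R ρ' : ℝ} (h0 : 0 < r) (hrR : r ≤ R) (hR : R < ρ') {f : ℂ → ℂ}
    (hd : DifferentiableOn ℂ f (ball (0 : ℂ) ρ' \ {0})) : cint 0 R f = cint 0 r f := by
  unfold cint
  congr 1
  have hsub : closedBall (0 : ℂ) R \ ball 0 r ⊆ ball (0 : ℂ) ρ' \ {0} := by
    rintro z ⟨hz1, hz2⟩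
    constructor
    · rw [mem_ball_zero_iff]; exact lt_of_le_of_lt (mem_closedBall_zero_iff.mp hz1) hR
    · simp only [mem_singleton_iff]
      intro h; apply hz2; rw [h]; exact mem_ball_self h0
  refine circleIntegral_eq_of_differentiable_on_annulus_off_countable h0 hrR countable_empty
    (hd.continuousOn.mono hsub) (fun z hz => ?_)
  have hzmem : z ∈ ball (0 : ℂ) ρ' \ {0} := by
    refine ⟨mem_ball_zero_iff.mpr (lt_of_lt_of_le (mem_ball_zero_iff.mp hz.1.1) (le_of_lt hR)), ?_⟩
    simp only [mem_singleton_iff]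
    intro h
    exact hz.1.2 (by rw [h]; exact mem_closedBall_self h0.le)
  exact hd.differentiableAt ((isOpen_ball.sdiff isClosed_singleton).mem_nhds hzmem)

lemma circleIntegrable_zpow_mul_inv {R : ℝ} (hR : 0 < R) {w : ℂ} (hwR : ‖w‖ ≠ R) (e : ℤ) :
    CircleIntegrable (fun z => z ^ e * (z - w)⁻¹) 0 R := by
  apply ContinuousOn.circleIntegrable hR.le
  intro z hz
  have hz' : ‖z‖ = R := by simpa using hz
  have hz0 : z ≠ 0 := by intro h; rw [h] at hz'; simp at hz'; linarith
  have hzw : z - w ≠ 0 := by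
    intro h; apply hwR; rw [show w = z by linear_combination -h]; exact hz'
  exact ((continuousAt_zpow₀ z e (Or.inl hz0)).continuousWithinAt).mul
    ((continuousWithinAt_id.sub continuousWithinAt_const).inv₀ hzw)

/-- key residue fact: `∮ z^{-ν-1}/(z-w) = 0` for `0 < ‖w‖ < R`. -/
lemma circleInt_zpow_inv_eq_zero {R : ℝ} (hR : 0 < R) {w : ℂ} (hw0 : w ≠ 0)
    (hwR : ‖w‖ < R) (ν : ℕ) :
    (∮ z in C(0, R), z ^ (-(ν + 1) : ℤ) * (z - w)⁻¹) = 0 := by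
  have hwR' : ‖w‖ ≠ R := ne_of_lt hwR
  have hwball : w ∈ ball (0 : ℂ) R := mem_ball_zero_iff.mpr hwR
  have hzfacts : ∀ z ∈ sphere (0 : ℂ) R, z ≠ 0 ∧ z - w ≠ 0 := by
    intro z hz
    have hz' : ‖z‖ = R := by simpa using hz
    constructor
    · intro h; rw [h] at hz'; simp at hz'; linarith
    · intro h; apply hwR'; rw [show w = z by linear_combination -h]; exact hz'
  induction ν with
  | zero =>
      have heq : EqOn (fun z : ℂ => z ^ (-((0 : ℕ) + 1) : ℤ) * (z - w)⁻¹)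
          (fun z : ℂ => w⁻¹ * ((z - w)⁻¹ - (z - 0)⁻¹)) (sphere (0 : ℂ) R) := by
        intro z hz
        obtain ⟨hz0, hzw⟩ := hzfacts z hz
        simp only [Nat.cast_zero, zero_add, zpow_neg, zpow_one, sub_zero]
        field_simp
        ring
      rw [circleIntegral.integral_congr hR.le heq, circleIntegral.integral_const_mul,
        circleIntegral.integral_sub ((circleIntegrable_sub_inv_iff).mpr (by
            right; intro hmem
            have : ‖w‖ = |R| := by simpa [Complex.dist_eq] using hmem
            rw [abs_of_pos hR] at this; exact hwR' this))
          ((circleIntegrable_sub_inv_iff).mpr (by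
            right; intro hmem
            have : ‖(0:ℂ)‖ = |R| := by simpa [Complex.dist_eq] using hmem
            simp at this
            rw [abs_of_pos hR] at this; linarith)),
        circleIntegral.integral_sub_inv_of_mem_ball hwball,
        circleIntegral.integral_sub_inv_of_mem_ball (mem_ball_self hR)]
      simp
  | succ ν ih =>
      have heq : EqOn (fun z : ℂ => z ^ (-((ν + 1 : ℕ) + 1) : ℤ) * (z - w)⁻¹)
          (fun z : ℂ => w⁻¹ * (z ^ (-(ν + 1) : ℤ) * (z - w)⁻¹ - (z - 0) ^ (-((ν : ℤ) + 1) - 1)))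
          (sphere (0 : ℂ) R) := by
        intro z hz
        obtain ⟨hz0, hzw⟩ := hzfacts z hz
        have hu : z ^ ((ν : ℤ) + 1) ≠ 0 := zpow_ne_zero _ hz0
        simp only [sub_zero, Nat.cast_add, Nat.cast_one]
        rw [show (-((ν : ℤ) + 1 + 1)) = (-((ν : ℤ) + 1)) + (-1) by ring,
          show (-((ν : ℤ) + 1) - 1) = (-((ν : ℤ) + 1)) + (-1) by ring,
          zpow_add₀ hz0, zpow_neg_one, zpow_neg]
        field_simp
        ring
      have hint1 : CircleIntegrable (fun z : ℂ => z ^ (-(ν + 1) : ℤ) * (z - w)⁻¹) 0 R :=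
        circleIntegrable_zpow_mul_inv hR hwR' _
      have hint2 : CircleIntegrable (fun z : ℂ => (z - 0) ^ (-((ν : ℤ) + 1) - 1)) 0 R := by
        rw [circleIntegrable_sub_zpow_iff]
        right; right
        intro h
        have : ‖(0 : ℂ)‖ = |R| := by simpa [Complex.dist_eq] using h
        simp at this
        rw [abs_of_pos hR] at this; linarith
      rw [circleIntegral.integral_congr hR.le heq, circleIntegral.integral_const_mul,
        circleIntegral.integral_sub hint1 hint2, ih,
        circleIntegral.integral_sub_zpow_of_ne (by omega) 0 0 R]
      simp

lemma circleIntegral_swap {τ1 τ2 : ℝ} {F : ℂ → ℂ → ℂ}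
    (hF : Continuous fun p : ℝ × ℝ => F (circleMap 0 τ1 p.1) (circleMap 0 τ2 p.2)) :
    (∮ z in C(0, τ1), ∮ w in C(0, τ2), F z w)
      = ∮ w in C(0, τ2), ∮ z in C(0, τ1), F z w := by
  simp only [circleIntegral_def_Icc]
  have hgcont : Continuous fun p : ℝ × ℝ =>
      deriv (circleMap 0 τ1) p.1 • deriv (circleMap 0 τ2) p.2 •
        F (circleMap 0 τ1 p.1) (circleMap 0 τ2 p.2) := by
    simp only [deriv_circleMap]
    exact (((continuous_circleMap 0 τ1).comp continuous_fst).mul continuous_const).smul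
      ((((continuous_circleMap 0 τ2).comp continuous_snd).mul continuous_const).smul hF)
  have hInt : Integrable
      (Function.uncurry fun θ1 θ2 => deriv (circleMap 0 τ1) θ1 • deriv (circleMap 0 τ2) θ2 •
        F (circleMap 0 τ1 θ1) (circleMap 0 τ2 θ2))
      ((volume.restrict (Icc (0:ℝ) (2*Real.pi))).prod
        (volume.restrict (Icc (0:ℝ) (2*Real.pi)))) := by
    rw [Measure.prod_restrict]
    rw [← Measure.volume_eq_prod ℝ ℝ]
    have h2 : IntegrableOn
        (fun p : ℝ × ℝ => deriv (circleMap 0 τ1) p.1 • deriv (circleMap 0 τ2) p.2 •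
          F (circleMap 0 τ1 p.1) (circleMap 0 τ2 p.2))
        (Icc (0:ℝ) (2*Real.pi) ×ˢ Icc (0:ℝ) (2*Real.pi)) volume :=
      hgcont.continuousOn.integrableOn_compact (isCompact_Icc.prod isCompact_Icc)
    exact h2
  calc (∫ θ1 in Icc (0:ℝ) (2*Real.pi), deriv (circleMap 0 τ1) θ1 •
          ∫ θ2 in Icc (0:ℝ) (2*Real.pi), deriv (circleMap 0 τ2) θ2 •
            F (circleMap 0 τ1 θ1) (circleMap 0 τ2 θ2))
      = ∫ θ1 in Icc (0:ℝ) (2*Real.pi), ∫ θ2 in Icc (0:ℝ) (2*Real.pi),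
          deriv (circleMap 0 τ1) θ1 • deriv (circleMap 0 τ2) θ2 •
            F (circleMap 0 τ1 θ1) (circleMap 0 τ2 θ2) := by
        congr 1; funext θ1; exact (integral_smul _ _).symm
    _ = ∫ θ2 in Icc (0:ℝ) (2*Real.pi), ∫ θ1 in Icc (0:ℝ) (2*Real.pi),
          deriv (circleMap 0 τ1) θ1 • deriv (circleMap 0 τ2) θ2 •
            F (circleMap 0 τ1 θ1) (circleMap 0 τ2 θ2) :=
        MeasureTheory.integral_integral_swap hInt
    _ = ∫ θ2 in Icc (0:ℝ) (2*Real.pi), deriv (circleMap 0 τ2) θ2 •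
          ∫ θ1 in Icc (0:ℝ) (2*Real.pi), deriv (circleMap 0 τ1) θ1 •
            F (circleMap 0 τ1 θ1) (circleMap 0 τ2 θ2) := by
        congr 1; funext θ2
        rw [← integral_smul]
        congr 1; funext θ1
        exact smul_comm _ _ _

lemma cint_swap {τ1 τ2 : ℝ} {F : ℂ → ℂ → ℂ}
    (hF : Continuous fun p : ℝ × ℝ => F (circleMap 0 τ1 p.1) (circleMap 0 τ2 p.2)) :
    cint 0 τ1 (fun z => cint 0 τ2 (fun w => F z w))
      = cint 0 τ2 (fun w => cint 0 τ1 (fun z => F z w)) := by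
  unfold cint
  simp only [circleIntegral.integral_const_mul]
  rw [circleIntegral_swap hF]

lemma circleMap_norm {r : ℝ} (hr : 0 ≤ r) (θ : ℝ) : ‖circleMap 0 r θ‖ = r := by
  rw [norm_circleMap_zero, _root_.abs_of_nonneg hr]

lemma collapse {τ1 τ2 R : ℝ} (h2 : 0 < τ2) (h21 : τ2 < τ1) (h1R : τ1 < R)
    {A B : ℂ → ℂ} (hA : DifferentiableOn ℂ A (ball (0:ℂ) R))
    (hB : ContinuousOn B (sphere (0:ℂ) τ2)) :
    cint 0 τ1 (fun z => cint 0 τ2 (fun w => A z * B w * (z - w)⁻¹))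
      = cint 0 τ2 (fun w => A w * B w) := by
  have h1 : (0:ℝ) < τ1 := h2.trans h21
  have hAc : ContinuousOn A (sphere (0:ℂ) τ1) :=
    hA.continuousOn.mono (sphere_subset_closedBall.trans (closedBall_subset_ball h1R))
  have hF : Continuous fun p : ℝ × ℝ =>
      A (circleMap 0 τ1 p.1) * B (circleMap 0 τ2 p.2)
        * (circleMap 0 τ1 p.1 - circleMap 0 τ2 p.2)⁻¹ := by
    have c1 : Continuous fun p : ℝ × ℝ => A (circleMap 0 τ1 p.1) :=
      hAc.comp_continuous ((continuous_circleMap 0 τ1).comp continuous_fst)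
        (fun p => circleMap_mem_sphere 0 h1.le p.1)
    have c2 : Continuous fun p : ℝ × ℝ => B (circleMap 0 τ2 p.2) :=
      hB.comp_continuous ((continuous_circleMap 0 τ2).comp continuous_snd)
        (fun p => circleMap_mem_sphere 0 h2.le p.2)
    have c3 : Continuous fun p : ℝ × ℝ =>
        (circleMap 0 τ1 p.1 - circleMap 0 τ2 p.2)⁻¹ := by
      refine Continuous.inv₀
        (((continuous_circleMap 0 τ1).comp continuous_fst).sub
          ((continuous_circleMap 0 τ2).comp continuous_snd)) (fun p => ?_)
      intro h
      have h1' : circleMap 0 τ1 p.1 = circleMap 0 τ2 p.2 := by linear_combination h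
      have := circleMap_norm h1.le p.1
      rw [h1', circleMap_norm h2.le] at this
      exact h21.ne this
    exact (c1.mul c2).mul c3
  rw [cint_swap hF]
  refine cint_congr h2.le (fun w hw => ?_)
  have hwτ : ‖w‖ = τ2 := by simpa using hw
  have hwb : w ∈ ball (0:ℂ) τ1 := mem_ball_zero_iff.mpr (by rw [hwτ]; exact h21)
  have hdf : DifferentiableOn ℂ (fun z => B w * A z) (closedBall (0:ℂ) τ1) :=
    (hA.mono (closedBall_subset_ball h1R)).const_smul (B w)
  calc cint 0 τ1 (fun z => A z * B w * (z - w)⁻¹)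
      = cint 0 τ1 (fun z => (z - w)⁻¹ * (B w * A z)) := by
        congr 1; funext z; ring
    _ = B w * A w := cint_cauchy hdf hwb
    _ = A w * B w := mul_comm _ _

lemma collapse_zero {τ1 τ2 : ℝ} (h2 : 0 < τ2) (h21 : τ2 < τ1) {c : ℂ} {α : ℤ} (hα : α < 0)
    {B : ℂ → ℂ} (hB : ContinuousOn B (sphere (0:ℂ) τ2)) :
    cint 0 τ1 (fun z => cint 0 τ2 (fun w => (c * z ^ α) * B w * (z - w)⁻¹)) = 0 := by
  have h1 : (0:ℝ) < τ1 := h2.trans h21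
  obtain ⟨ν, hν⟩ : ∃ ν : ℕ, α = -((ν : ℤ) + 1) := ⟨(-α - 1).toNat, by omega⟩
  subst hν
  have hF : Continuous fun p : ℝ × ℝ =>
      (c * circleMap 0 τ1 p.1 ^ (-((ν : ℤ) + 1))) * B (circleMap 0 τ2 p.2)
        * (circleMap 0 τ1 p.1 - circleMap 0 τ2 p.2)⁻¹ := by
    have c1 : Continuous fun p : ℝ × ℝ => c * circleMap 0 τ1 p.1 ^ (-((ν : ℤ) + 1)) := by
      refine continuous_const.mul ?_
      refine continuous_iff_continuousAt.mpr (fun p => ?_)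
      have hne : circleMap 0 τ1 p.1 ≠ 0 := by
        intro h
        have := circleMap_norm h1.le p.1
        rw [h] at this; simp at this; linarith
      have hinner : ContinuousAt (fun p : ℝ × ℝ => circleMap 0 τ1 p.1) p :=
        ((continuous_circleMap 0 τ1).comp continuous_fst).continuousAt
      exact hinner.zpow₀ _ (Or.inl hne)
    have c2 : Continuous fun p : ℝ × ℝ => B (circleMap 0 τ2 p.2) :=
      hB.comp_continuous ((continuous_circleMap 0 τ2).comp continuous_snd)
        (fun p => circleMap_mem_sphere 0 h2.le p.2)
    have c3 : Continuous fun p : ℝ × ℝ =>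
        (circleMap 0 τ1 p.1 - circleMap 0 τ2 p.2)⁻¹ := by
      refine Continuous.inv₀
        (((continuous_circleMap 0 τ1).comp continuous_fst).sub
          ((continuous_circleMap 0 τ2).comp continuous_snd)) (fun p => ?_)
      intro h
      have h1' : circleMap 0 τ1 p.1 = circleMap 0 τ2 p.2 := by linear_combination h
      have := circleMap_norm h1.le p.1
      rw [h1', circleMap_norm h2.le] at this
      exact h21.ne this
    exact (c1.mul c2).mul c3
  rw [cint_swap hF]
  have : EqOn (fun w => cint 0 τ1 fun z => c * z ^ (-((ν : ℤ) + 1)) * B w * (z - w)⁻¹)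
      (fun _ => (0 : ℂ)) (sphere (0:ℂ) τ2) := by
    intro w hw
    have hwτ : ‖w‖ = τ2 := by simpa using hw
    have hw0 : w ≠ 0 := by intro h; rw [h] at hwτ; simp at hwτ; linarith
    have hwR : ‖w‖ < τ1 := by rw [hwτ]; exact h21
    calc cint 0 τ1 (fun z => c * z ^ (-((ν : ℤ) + 1)) * B w * (z - w)⁻¹)
        = cint 0 τ1 (fun z => (c * B w) * (z ^ (-((ν : ℤ) + 1)) * (z - w)⁻¹)) := by
          congr 1; funext z; ring
      _ = (c * B w) * cint 0 τ1 (fun z => z ^ (-((ν : ℤ) + 1)) * (z - w)⁻¹) :=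
          cint_const_mul _ _ _ _
      _ = 0 := by
          unfold cint
          rw [circleInt_zpow_inv_eq_zero h1 hw0 hwR ν]
          simp
  rw [cint_congr h2.le this, cint_zero]


/-! ### kernel-level lemmas -/

lemma integrand_rw (q : ℝ) (n1 m1 a1 n2 m2 a2 : ℤ) (z w : ℂ) :
    Gfun q n1 m1 a1 z / (Gfun q n2 m2 a2 w * (z - w))
      = Gfun q n1 m1 a1 z * Gfun q (-n2) (-m2) (-a2) w * (z - w)⁻¹ := by
  rw [div_eq_mul_inv, mul_inv, ← gfun_inv]; ring

variable {q τ1 τ2 : ℝ}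

lemma KA (hq0 : 0 < q) (hq1 : q < 1) (h2 : 0 < τ2) (h21 : τ2 < τ1)
    (h1ρ : τ1 < 1 - Real.sqrt q) {n1 m1 a1 n2 m2 a2 : ℤ} (hn2 : n2 ≤ 0) :
    cint 0 τ1 (fun z => cint 0 τ2 (fun w =>
      Gfun q n1 m1 a1 z / (Gfun q n2 m2 a2 w * (z - w)))) = 0 := by
  have hρq : 1 - Real.sqrt q < 1 - q := rho_lt hq0 hq1
  have h1 : (0:ℝ) < τ1 := h2.trans h21
  have hEq : EqOn (fun z => cint 0 τ2 (fun w =>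
      Gfun q n1 m1 a1 z / (Gfun q n2 m2 a2 w * (z - w)))) (fun _ => (0:ℂ))
      (Metric.sphere (0:ℂ) τ1) := by
    intro z hz
    have hzτ : ‖z‖ = τ1 := by simpa using hz
    simp only
    have hrw : (fun w => Gfun q n1 m1 a1 z / (Gfun q n2 m2 a2 w * (z - w)))
        = fun w => Gfun q n1 m1 a1 z * Gfun q (-n2) (-m2) (-a2) w * (z - w)⁻¹ :=
      funext fun w => integrand_rw q n1 m1 a1 n2 m2 a2 z w
    rw [hrw]
    refine cint_eq_zero_of_diff h2.le h21 (fun w hw => ?_)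
    have hwball : ‖w‖ < τ1 := mem_ball_zero_iff.mp hw
    have hwlt : ‖w‖ < 1 - q := by linarith
    have hzw : z - w ≠ 0 := by
      intro h
      have : z = w := by linear_combination h
      rw [this] at hzτ; linarith
    exact (((gfun_differentiableAt hq0 hq1 hwlt (Or.inr (by omega))).const_mul _).mul
      (((differentiableAt_const z).sub differentiableAt_id).inv hzw)).differentiableWithinAt
  rw [cint_congr h1.le hEq, cint_zero]

lemma KB (hq0 : 0 < q) (hq1 : q < 1) (h2 : 0 < τ2) (h21 : τ2 < τ1)
    (h1ρ : τ1 < 1 - Real.sqrt q) {n1 m1 a1 n2 m2 a2 : ℤ} (hn1 : 0 ≤ n1) :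
    cint 0 τ1 (fun z => cint 0 τ2 (fun w =>
      Gfun q n1 m1 a1 z / (Gfun q n2 m2 a2 w * (z - w))))
      = cint 0 τ2 (fun w => Gfun q (n1 - n2) (m1 - m2) (a1 - a2) w) := by
  have hρq : 1 - Real.sqrt q < 1 - q := rho_lt hq0 hq1
  have h2q : τ2 < 1 - q := by linarith
  simp only [integrand_rw]
  rw [collapse h2 h21 (show τ1 < 1 - q by linarith)
    (gfun_diffOn hq0 hq1 hn1 m1 a1) (gfun_contOn_sphere hq0 hq1 h2 h2q _ _ _)]
  refine cint_congr h2.le (fun w hw => ?_)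
  have hwτ : ‖w‖ = τ2 := by simpa using hw
  have hw0 : w ≠ 0 := by intro h; rw [h] at hwτ; simp at hwτ; linarith
  rw [gfun_mul hq0 hq1 hw0 (by rw [hwτ]; exact h2q)]
  rw [show n1 + -n2 = n1 - n2 by ring, show m1 + -m2 = m1 - m2 by ring,
    show a1 + -a2 = a1 - a2 by ring]

lemma KC (hq0 : 0 < q) (hq1 : q < 1) (h2 : 0 < τ2) (h21 : τ2 < τ1)
    (h1ρ : τ1 < 1 - Real.sqrt q) {n1 n2 m2 a2 : ℤ} (hn1 : n1 < 0) :
    cint 0 τ1 (fun z => cint 0 τ2 (fun w =>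
      Gfun q n1 0 0 z / (Gfun q n2 m2 a2 w * (z - w)))) = 0 := by
  have hρq : 1 - Real.sqrt q < 1 - q := rho_lt hq0 hq1
  have h2q : τ2 < 1 - q := by linarith
  simp only [integrand_rw]
  simp only [gfun_w0_pure]
  exact collapse_zero (c := ((1 - (Real.sqrt q : ℂ)) ^ n1)⁻¹) (α := n1)
    (B := fun w => Gfun q (-n2) (-m2) (-a2) w) h2 h21 hn1
    (gfun_contOn_sphere hq0 hq1 h2 h2q _ _ _)

lemma S0 (hq0 : 0 < q) (hq1 : q < 1) {r : ℝ} (hr0 : 0 ≤ r) (hrρ : r < 1 - Real.sqrt q)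
    {d : ℤ} (hd : 0 ≤ d) (m' a' : ℤ) :
    cint 0 r (fun w => Gfun q d m' a' w) = 0 :=
  cint_eq_zero_of_diff hr0 (lt_trans hrρ (rho_lt hq0 hq1)) (gfun_diffOn hq0 hq1 hd m' a')

lemma SE (hq0 : 0 < q) (hq1 : q < 1) {r : ℝ} (hr0 : 0 < r) (d : ℤ) :
    cint 0 r (fun w => Gfun q d 0 0 w)
      = if d = -1 then 1 - (Real.sqrt q : ℂ) else 0 := by
  simp only [gfun_w0_pure]
  rw [cint_const_mul]
  by_cases hd : d = -1
  · subst hd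
    have h1 : (fun z : ℂ => z ^ (-1 : ℤ)) = fun z : ℂ => (z - 0)⁻¹ := by
      funext z; rw [zpow_neg_one, sub_zero]
    rw [if_pos rfl, h1]
    unfold cint
    rw [circleIntegral.integral_sub_inv_of_mem_ball (Metric.mem_ball_self hr0),
      inv_mul_cancel₀ two_pi_I_ne, mul_one, zpow_neg_one, inv_inv]
  · have h1 : (fun z : ℂ => z ^ d) = fun z : ℂ => (z - 0) ^ d := by
      funext z; rw [sub_zero]
    rw [if_neg hd, h1]
    unfold cint
    rw [circleIntegral.integral_sub_zpow_of_ne hd 0 0 r]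
    simp

lemma SC (hq0 : 0 < q) (hq1 : q < 1) {r r' : ℝ} (hr0 : 0 < r)
    (hrρ : r < 1 - Real.sqrt q) (hr0' : 0 < r') (hrρ' : r' < 1 - Real.sqrt q)
    (d m' a' : ℤ) :
    cint 0 r (fun w => Gfun q d m' a' w) = cint 0 r' (fun w => Gfun q d m' a' w) := by
  have hρq : 1 - Real.sqrt q < 1 - q := rho_lt hq0 hq1
  rcases le_total r' r with h | h
  · exact cint_annulus hr0' h (show r < 1 - q by linarith) (gfun_diffOn_punct hq0 hq1 d m' a')
  · exact (cint_annulus hr0 h (show r' < 1 - q by linarith)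
      (gfun_diffOn_punct hq0 hq1 d m' a')).symm


lemma blockIdx_eq_of {n : ℕ → ℕ} {p i r : ℕ}
    (hmono : ∀ x y, x ≤ y → y ≤ p → n x ≤ n y)
    (hr1 : 1 ≤ r) (hrp : r ≤ p) (h1 : n (r - 1) < i) (h2 : i ≤ n r) :
    blockIdx n i = r := by
  unfold blockIdx
  have hmem : r ∈ {r' : ℕ | i ≤ n r'} := h2
  refine le_antisymm (Nat.sInf_le hmem) ?_
  by_contra hlt
  push_neg at hlt
  have hmem' : sInf {r' : ℕ | i ≤ n r'} ∈ {r' : ℕ | i ≤ n r'} :=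
    Nat.sInf_mem ⟨r, hmem⟩
  have hle : sInf {r' : ℕ | i ≤ n r'} ≤ r - 1 := by omega
  have := hmono _ (r - 1) hle (by omega)
  simp only [Set.mem_setOf_eq] at hmem'
  omega

end Stmt15

open Stmt15

/-- (Lemma `lem:Lkhelper` of the paper.)  The decomposition of
`L_k − L_{k−1}` into identity, `B`, and boundary `L`-pieces. -/
theorem statement15
    (q : ℝ) (hq0 : 0 < q) (hq1 : q < 1)
    (p N : ℕ) (hp : 2 ≤ p)
    (n : ℕ → ℕ) (hn0 : n 0 = 0) (hn1 : 1 ≤ n 1)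
    (hnmono : ∀ k ∈ Finset.Icc 1 (p - 1), n k < n (k + 1)) (hnp : n p = N)
    (m : ℕ → ℕ) (hm0 : m 0 = 0) (hm1 : 0 < m 1)
    (hmmono : ∀ k ∈ Finset.Icc 1 (p - 1), m k < m (k + 1))
    (a : ℕ → ℤ) (ha0 : a 0 = 0)
    (τ1 τ2 τ : ℝ) (hτ2 : 0 < τ2) (hτ21 : τ2 < τ1) (hτ1 : τ1 < 1 - Real.sqrt q)
    (hτ0 : 0 < τ) (hτ : τ < 1 - Real.sqrt q) :
    ∀ k ∈ Finset.Icc 1 p, ∀ i j : ℕ, 1 ≤ i → i ≤ N → 1 ≤ j → j ≤ N →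
      Lker q p n m a τ1 τ2 k i j - Lker q p n m a τ1 τ2 (k - 1) i j
        = (if (n (k - 1) < i ∧ i ≤ n k) ∧ (n (k - 1) < j ∧ j ≤ n k) ∧ i = j
            then 1 else 0)
          + (if (n (k - 1) < i ∧ i ≤ n k) ∧ j ≤ n (min (k - 1) (p - 2))
              then 1 else 0) * Bker q p n m a τ i j
          + (if n k < i ∧ j ≤ n k ∧ k ≤ p - 2 then 1 else 0)
              * Lker q p n m a τ1 τ2 k i j
          - (if n (k - 1) < i ∧ j ≤ n (k - 1) ∧ k ≤ p - 1 then 1 else 0)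
              * Lker q p n m a τ1 τ2 (k - 1) i j := by
  intro k hk i j hi hiN hj hjN
  obtain ⟨hk1, hkp⟩ := Finset.mem_Icc.mp hk
  have hw0ne : (1 : ℂ) - (Real.sqrt q : ℂ) ≠ 0 := w0_ne hq0 hq1
  -- strict monotonicity of n on [0,p]
  have nstep : ∀ r, r < p → n r < n (r + 1) := by
    intro r hr
    rcases Nat.eq_zero_or_pos r with h | h
    · subst h; simp only [zero_add]; omega
    · exact hnmono r (Finset.mem_Icc.mpr ⟨h, by omega⟩)
  have nstrict : ∀ x y, x < y → y ≤ p → n x < n y := by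
    intro x y hxy hyp
    induction y with
    | zero => omega
    | succ y ih =>
        rcases Nat.lt_or_ge x y with h | h
        · exact lt_trans (ih h (by omega)) (nstep y (by omega))
        · have hxy' : x = y := by omega
          subst hxy'; exact nstep x (by omega)
  have nle : ∀ x y, x ≤ y → y ≤ p → n x ≤ n y := by
    intro x y hxy hyp
    rcases Nat.eq_or_lt_of_le hxy with h | h
    · subst h; exact le_refl _
    · exact (nstrict x y h hyp).le
  -- generic unfolding of Lker
  have hLker : ∀ k' : ℕ, k' ≠ 0 → Lker q p n m a τ1 τ2 k' i j
      = (1 - (Real.sqrt q : ℂ))⁻¹ * cint 0 τ1 (fun ζ1 => cint 0 τ2 (fun ζ2 =>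
          Gfun q ((n k' : ℤ) - i) ((m k' : ℤ) - mOf p n m i) (a k' - aOf p n a i) ζ1
          / (Gfun q ((n k' : ℤ) - j + 1) ((m k' : ℤ) - mOf p n m j) (a k' - aOf p n a j) ζ2
             * (ζ1 - ζ2)))) := by
    intro k' hk'
    simp only [Lker, if_neg hk']
  -- vanishing when j is to the right of n k'
  have HL0 : ∀ k', 1 ≤ k' → n k' < j → Lker q p n m a τ1 τ2 k' i j = 0 := by
    intro k' h1 h2
    rw [hLker k' (by omega),
      KA hq0 hq1 hτ2 hτ21 hτ1 (show (n k' : ℤ) - j + 1 ≤ 0 by push_cast; omega), mul_zero]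
  -- collapse to a single contour integral
  have HCol : ∀ k', 1 ≤ k' → i ≤ n k' → Lker q p n m a τ1 τ2 k' i j
      = (1 - (Real.sqrt q : ℂ))⁻¹ * cint 0 τ2 (fun w => Gfun q ((j : ℤ) - i - 1)
          ((mOf p n m j : ℤ) - mOf p n m i) (aOf p n a j - aOf p n a i) w) := by
    intro k' h1 h2
    rw [hLker k' (by omega),
      KB hq0 hq1 hτ2 hτ21 hτ1 (show (0 : ℤ) ≤ (n k' : ℤ) - i by push_cast; omega),
      show ((n k' : ℤ) - i) - ((n k' : ℤ) - j + 1) = (j : ℤ) - i - 1 by ring,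
      show ((m k' : ℤ) - mOf p n m i) - ((m k' : ℤ) - mOf p n m j)
        = (mOf p n m j : ℤ) - mOf p n m i by ring,
      show (a k' - aOf p n a i) - (a k' - aOf p n a j)
        = aOf p n a j - aOf p n a i by ring]
  -- Bker in collapsed form
  have HB : Bker q p n m a τ i j
      = (1 - (Real.sqrt q : ℂ))⁻¹ * cint 0 τ (fun w => Gfun q ((j : ℤ) - i - 1)
          ((mOf p n m j : ℤ) - mOf p n m i) (aOf p n a j - aOf p n a i) w) := by
    unfold Bker
    congr 2
    funext w
    rw [gfun_inv,
      show -((i : ℤ) - j + 1) = (j : ℤ) - i - 1 by ring,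
      show -((mOf p n m i : ℤ) - mOf p n m j) = (mOf p n m j : ℤ) - mOf p n m i by ring,
      show -(aOf p n a i - aOf p n a j) = aOf p n a j - aOf p n a i by ring]
  -- vanishing via pure-power numerator
  have HPure : ∀ k', 1 ≤ k' → (m k' : ℤ) - mOf p n m i = 0 →
      a k' - aOf p n a i = 0 → n k' < i → Lker q p n m a τ1 τ2 k' i j = 0 := by
    intro k' h1 hm ha hn
    rw [hLker k' (by omega), hm, ha,
      KC hq0 hq1 hτ2 hτ21 hτ1 (show (n k' : ℤ) - i < 0 by push_cast; omega), mul_zero]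
  -- value of L_{k-1}
  have hLK0_of : n (k - 1) < j → Lker q p n m a τ1 τ2 (k - 1) i j = 0 := by
    intro h
    rcases Nat.eq_or_lt_of_le hk1 with h1 | h1
    · simp [Lker, ← h1]
    · exact HL0 (k - 1) (by omega) h
  -- useful monotonicity facts
  have hf1 : n (min (k - 1) (p - 2)) ≤ n (k - 1) := nle _ _ (by omega) (by omega)
  have hf2 : n (k - 1) ≤ n k := nle _ _ (by omega) hkp
  -- the case analysis
  by_cases hJ1 : n k < j
  · rw [HL0 k hk1 hJ1, hLK0_of (by omega),
      if_neg (by omega), if_neg (by omega), if_neg (by omega), if_neg (by omega)]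
    ring
  · push_neg at hJ1
    by_cases hJ3 : j ≤ n (k - 1)
    · -- j in an earlier block
      have hk2 : 2 ≤ k := by
        rcases Nat.eq_or_lt_of_le hk1 with h1 | h1
        · exfalso; rw [← h1] at hJ3; simp [hn0] at hJ3; omega
        · omega
      by_cases hI1 : i ≤ n (k - 1)
      · rw [HCol k hk1 (by omega), HCol (k - 1) (by omega) hI1,
          if_neg (by omega), if_neg (by omega), if_neg (by omega), if_neg (by omega)]
        ring
      · push_neg at hI1
        by_cases hI2 : i ≤ n k
        · -- i in block k
          have hLkB : Lker q p n m a τ1 τ2 k i j = Bker q p n m a τ i j := by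
            rw [HCol k hk1 hI2, HB]
            congr 1
            exact SC hq0 hq1 hτ2 (by linarith) hτ0 hτ _ _ _
          by_cases hkp1 : k ≤ p - 1
          · rw [hLkB, if_neg (by omega),
              if_pos (show ((n (k-1) < i ∧ i ≤ n k) ∧ j ≤ n (min (k - 1) (p - 2))) by
                constructor
                · exact ⟨hI1, hI2⟩
                · rw [show min (k - 1) (p - 2) = k - 1 by omega]; exact hJ3),
              if_neg (by omega), if_pos (show n (k-1) < i ∧ j ≤ n (k-1) ∧ k ≤ p - 1 from
                ⟨hI1, hJ3, hkp1⟩)]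
            ring
          · -- k = p
            have hkp' : k = p := by omega
            have hbip : blockIdx n i = p :=
              blockIdx_eq_of nle (by omega) (le_refl p) (by rw [← hkp'] at *; omega)
                (by omega)
            have hmOfi : mOf p n m i = m (p - 1) := by
              unfold mOf rstar; rw [hbip, show min p (p - 1) = p - 1 by omega]
            have haOfi : aOf p n a i = a (p - 1) := by
              unfold aOf rstar; rw [hbip, show min p (p - 1) = p - 1 by omega]
            have hLK0 : Lker q p n m a τ1 τ2 (k - 1) i j = 0 := by
              refine HPure (k - 1) (by omega) ?_ ?_ (by omega)
              · rw [hmOfi, hkp']; push_cast; ring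
              · rw [haOfi, hkp']; ring
            by_cases hj2 : j ≤ n (p - 2)
            · rw [hLkB, hLK0, if_neg (by omega),
                if_pos (show ((n (k-1) < i ∧ i ≤ n k) ∧ j ≤ n (min (k - 1) (p - 2))) by
                  refine ⟨⟨hI1, hI2⟩, ?_⟩
                  rw [show min (k - 1) (p - 2) = p - 2 by omega]; exact hj2),
                if_neg (by omega), if_neg (by omega)]
              ring
            · push_neg at hj2
              have hbjp : blockIdx n j = p - 1 :=
                blockIdx_eq_of nle (by omega) (by omega)
                  (by rw [show p - 1 - 1 = p - 2 by omega]; exact hj2)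
                  (by rw [show k - 1 = p - 1 by omega] at hJ3; exact hJ3)
              have hmOfj : mOf p n m j = m (p - 1) := by
                unfold mOf rstar; rw [hbjp, min_self]
              have haOfj : aOf p n a j = a (p - 1) := by
                unfold aOf rstar; rw [hbjp, min_self]
              have hLk0 : Lker q p n m a τ1 τ2 k i j = 0 := by
                rw [HCol k hk1 hI2,
                  show (mOf p n m j : ℤ) - mOf p n m i = 0 by rw [hmOfj, hmOfi]; ring,
                  show aOf p n a j - aOf p n a i = 0 by rw [haOfj, haOfi]; ring,
                  SE hq0 hq1 hτ2 _, if_neg (show ¬((j : ℤ) - i - 1 = -1) by push_cast; omega),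
                  mul_zero]
              rw [show min (k - 1) (p - 2) = p - 2 by omega] 
              rw [hLk0, hLK0, if_neg (by omega), if_neg (by omega), if_neg (by omega),
                if_neg (by omega)]
              ring
        · -- i beyond block k
          push_neg at hI2
          have hklt : k < p := by
            rcases Nat.eq_or_lt_of_le hkp with h1 | h1
            · exfalso; rw [h1, hnp] at hI2; omega
            · exact h1
          by_cases hk2p : k ≤ p - 2
          · rw [if_neg (by omega), if_neg (by omega),
              if_pos (show n k < i ∧ j ≤ n k ∧ k ≤ p - 2 from ⟨hI2, by omega, hk2p⟩),
              if_pos (show n (k-1) < i ∧ j ≤ n (k-1) ∧ k ≤ p - 1 from ⟨by omega, hJ3, by omega⟩)]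
            ring
          · have hkp1 : k = p - 1 := by omega
            have hbip : blockIdx n i = p :=
              blockIdx_eq_of nle (by omega) (le_refl p)
                (by rw [show p - 1 = k by omega]; exact hI2) (by omega)
            have hmOfi : mOf p n m i = m (p - 1) := by
              unfold mOf rstar; rw [hbip, show min p (p - 1) = p - 1 by omega]
            have haOfi : aOf p n a i = a (p - 1) := by
              unfold aOf rstar; rw [hbip, show min p (p - 1) = p - 1 by omega]
            have hLk0 : Lker q p n m a τ1 τ2 k i j = 0 := by
              refine HPure k hk1 ?_ ?_ hI2
              · rw [hmOfi, hkp1]; ring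
              · rw [haOfi, hkp1]; ring
            rw [hLk0, if_neg (by omega), if_neg (by omega), if_neg (by omega),
              if_pos (show n (k-1) < i ∧ j ≤ n (k-1) ∧ k ≤ p - 1 from ⟨by omega, hJ3, by omega⟩)]
            ring
    · -- n (k-1) < j ≤ n k : j in block k
      push_neg at hJ3
      have hLK0 : Lker q p n m a τ1 τ2 (k - 1) i j = 0 := hLK0_of hJ3
      by_cases hI1 : i ≤ n (k - 1)
      · have hLk0 : Lker q p n m a τ1 τ2 k i j = 0 := by
          rw [HCol k hk1 (by omega),
            S0 hq0 hq1 hτ2.le (by linarith) (show (0:ℤ) ≤ (j : ℤ) - i - 1 by push_cast; omega)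
              _ _, mul_zero]
        rw [hLk0, hLK0, if_neg (by omega), if_neg (by omega), if_neg (by omega),
          if_neg (by omega)]
        ring
      · push_neg at hI1
        by_cases hI2 : i ≤ n k
        · -- i and j both in block k
          have hbi : blockIdx n i = k := blockIdx_eq_of nle hk1 hkp hI1 hI2
          have hbj : blockIdx n j = k := blockIdx_eq_of nle hk1 hkp hJ3 hJ1
          have hmm : mOf p n m i = mOf p n m j := by unfold mOf rstar; rw [hbi, hbj]
          have haa : aOf p n a i = aOf p n a j := by unfold aOf rstar; rw [hbi, hbj]
          have hLkval : Lker q p n m a τ1 τ2 k i j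
              = (1 - (Real.sqrt q : ℂ))⁻¹
                * (if (j : ℤ) - i - 1 = -1 then 1 - (Real.sqrt q : ℂ) else 0) := by
            rw [HCol k hk1 hI2,
              show (mOf p n m j : ℤ) - mOf p n m i = 0 by rw [hmm]; ring,
              show aOf p n a j - aOf p n a i = 0 by rw [haa]; ring,
              SE hq0 hq1 hτ2 _]
          by_cases hij : i = j
          · have hLk1 : Lker q p n m a τ1 τ2 k i j = 1 := by
              rw [hLkval, if_pos (show (j : ℤ) - i - 1 = -1 by rw [hij]; ring),
                inv_mul_cancel₀ hw0ne]
            rw [hLk1, hLK0, if_pos (show ((n (k-1) < i ∧ i ≤ n k) ∧ (n (k-1) < j ∧ j ≤ n k)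
                ∧ i = j) from ⟨⟨hI1, hI2⟩, ⟨hJ3, hJ1⟩, hij⟩),
              if_neg (by omega), if_neg (by omega), if_neg (by omega)]
            ring
          · have hLk0 : Lker q p n m a τ1 τ2 k i j = 0 := by
              rw [hLkval, if_neg (show ¬((j : ℤ) - i - 1 = -1) by
                intro h; apply hij; push_cast at h; omega), mul_zero]
            rw [hLk0, hLK0, if_neg (by omega), if_neg (by omega), if_neg (by omega),
              if_neg (by omega)]
            ring
        · push_neg at hI2
          have hklt : k < p := by
            rcases Nat.eq_or_lt_of_le hkp with h1 | h1
            · exfalso; rw [h1, hnp] at hI2; omega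
            · exact h1
          by_cases hk2p : k ≤ p - 2
          · rw [hLK0, if_neg (by omega), if_neg (by omega),
              if_pos (show n k < i ∧ j ≤ n k ∧ k ≤ p - 2 from ⟨hI2, hJ1, hk2p⟩),
              if_neg (by omega)]
            ring
          · have hkp1 : k = p - 1 := by omega
            have hbip : blockIdx n i = p :=
              blockIdx_eq_of nle (by omega) (le_refl p)
                (by rw [show p - 1 = k by omega]; exact hI2) (by omega)
            have hmOfi : mOf p n m i = m (p - 1) := by
              unfold mOf rstar; rw [hbip, show min p (p - 1) = p - 1 by omega]
            have haOfi : aOf p n a i = a (p - 1) := by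
              unfold aOf rstar; rw [hbip, show min p (p - 1) = p - 1 by omega]
            have hLk0 : Lker q p n m a τ1 τ2 k i j = 0 := by
              refine HPure k hk1 ?_ ?_ hI2
              · rw [hmOfi, hkp1]; ring
              · rw [haOfi, hkp1]; ring
            rw [hLk0, hLK0, if_neg (by omega), if_neg (by omega), if_neg (by omega),
              if_neg (by omega)]
            ring

end
end

section
/- Let 0 ≤ N_1 < N_2 be integers, let w_1 ≠ w_2 belong to ℂ ∖ {0, 1, 1−q}, and let n, m, a, n', m', a' be integers. Then, with w_c = 1−√q, ∑_{N_1 < ℓ ≤ N_2} 1 / ( G(w_1 | n−ℓ+1, m, a) · G(w_2 | ℓ−n', m', a') ) = ( w_c / (w_1 − w_2) ) · [ 1/( G(w_1 | n−N_2, m, a) · G(w_2 | N_2−n', m', a') ) − 1/( G(w_1 | n−N_1, m, a) · G(w_2 | N_1−n', m', a') ) ]. -/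
open MeasureTheory ProbabilityTheory Complex
open scoped Real BigOperators Nat

noncomputable section

lemma sqrtq_lt_one {q : ℝ} (hq0 : 0 < q) (hq1 : q < 1) : Real.sqrt q < 1 := by
  nlinarith [Real.sq_sqrt hq0.le, Real.sqrt_nonneg q]

lemma wc_ne_zero {q : ℝ} (hq0 : 0 < q) (hq1 : q < 1) : (1 : ℂ) - (Real.sqrt q : ℂ) ≠ 0 := by
  have h := sqrtq_lt_one hq0 hq1
  intro hc
  have : (Real.sqrt q : ℂ) = 1 := by linear_combination -hc
  rw [show (1 : ℂ) = ((1 : ℝ) : ℂ) by norm_num] at this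
  exact absurd (Complex.ofReal_inj.mp this) h.ne

lemma Gstar_ne_zero {q : ℝ} (hq0 : 0 < q) (hq1 : q < 1) (n m a : ℤ) {w : ℂ}
    (hw0 : w ≠ 0) (hw1 : w ≠ 1) (hwq : w ≠ 1 - (q : ℂ)) :
    Gstar q n m a w ≠ 0 := by
  have h1 : (1 : ℂ) - w ≠ 0 := fun h => hw1 (by linear_combination -h)
  have hq : (1 : ℂ) - (q : ℂ) ≠ 0 := by
    intro h
    have : ((q : ℝ) : ℂ) = ((1 : ℝ) : ℂ) := by push_cast; linear_combination -h
    exact absurd (Complex.ofReal_inj.mp this) hq1.ne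
  have h2 : (1 : ℂ) - w / (1 - (q : ℂ)) ≠ 0 := by
    intro h
    apply hwq
    field_simp at h
    linear_combination -h
  exact div_ne_zero (mul_ne_zero (zpow_ne_zero _ hw0) (zpow_ne_zero _ h1)) (zpow_ne_zero _ h2)

lemma Gstar_wc_ne_zero {q : ℝ} (hq0 : 0 < q) (hq1 : q < 1) (n m a : ℤ) :
    Gstar q n m a (1 - (Real.sqrt q : ℂ)) ≠ 0 := by
  apply Gstar_ne_zero hq0 hq1
  · exact wc_ne_zero hq0 hq1
  · intro h
    have : ((Real.sqrt q : ℝ) : ℂ) = ((0 : ℝ) : ℂ) := by push_cast; linear_combination -h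
    have := Complex.ofReal_inj.mp this
    exact absurd this (Real.sqrt_ne_zero'.mpr hq0)
  · intro h
    have : ((Real.sqrt q : ℝ) : ℂ) = ((q : ℝ) : ℂ) := by push_cast; linear_combination -h
    have h2 := Complex.ofReal_inj.mp this
    nlinarith [Real.sq_sqrt hq0.le, Real.sqrt_pos.mpr hq0]

lemma Gfun_ne_zero {q : ℝ} (hq0 : 0 < q) (hq1 : q < 1) (n m a : ℤ) {w : ℂ}
    (hw0 : w ≠ 0) (hw1 : w ≠ 1) (hwq : w ≠ 1 - (q : ℂ)) :
    Gfun q n m a w ≠ 0 :=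
  div_ne_zero (Gstar_ne_zero hq0 hq1 n m a hw0 hw1 hwq) (Gstar_wc_ne_zero hq0 hq1 n m a)

lemma Gfun_succ {q : ℝ} (hq0 : 0 < q) (hq1 : q < 1) (n m a : ℤ) {w : ℂ} (hw0 : w ≠ 0) :
    Gfun q (n + 1) m a w = (w / (1 - (Real.sqrt q : ℂ))) * Gfun q n m a w := by
  have hwc := wc_ne_zero hq0 hq1
  have key : ∀ (v : ℂ), v ≠ 0 → Gstar q (n + 1) m a v = v * Gstar q n m a v := by
    intro v hv
    unfold Gstar
    rw [zpow_add_one₀ hv]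
    ring
  unfold Gfun
  rw [key w hw0, key _ hwc]
  have h := Gstar_wc_ne_zero hq0 hq1 n m a
  field_simp

/-- (Lemma `lem:multiply` of the paper.)  The geometric summation
identity used to multiply kernels by `B`, with `w_c = 1 − √q`. -/
theorem statement16
    (q : ℝ) (hq0 : 0 < q) (hq1 : q < 1)
    (N1 N2 : ℕ) (hN : N1 < N2)
    (w1 w2 : ℂ) (hw10 : w1 ≠ 0) (hw11 : w1 ≠ 1) (hw1q : w1 ≠ 1 - (q : ℂ))
    (hw20 : w2 ≠ 0) (hw21 : w2 ≠ 1) (hw2q : w2 ≠ 1 - (q : ℂ)) (hne : w1 ≠ w2)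
    (n m a n' m' a' : ℤ) :
    (∑ l ∈ Finset.Ioc N1 N2,
        (Gfun q (n - l + 1) m a w1 * Gfun q ((l : ℤ) - n') m' a' w2)⁻¹)
      = ((1 - (Real.sqrt q : ℂ)) / (w1 - w2)) *
          ((Gfun q (n - N2) m a w1 * Gfun q ((N2 : ℤ) - n') m' a' w2)⁻¹
            - (Gfun q (n - N1) m a w1 * Gfun q ((N1 : ℤ) - n') m' a' w2)⁻¹) := by
  set wc : ℂ := 1 - (Real.sqrt q : ℂ) with hwc_def
  have hwc : wc ≠ 0 := hwc_def ▸ wc_ne_zero hq0 hq1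
  set f : ℤ → ℂ := fun t => (Gfun q (n - t) m a w1 * Gfun q (t - n') m' a' w2)⁻¹ with hf
  clear_value wc f
  have key : ∀ t : ℤ,
      (Gfun q (n - t + 1) m a w1 * Gfun q (t - n') m' a' w2)⁻¹
        = (wc / (w1 - w2)) * (f t - f (t - 1)) := by
    intro t
    have hA : Gfun q (n - t) m a w1 ≠ 0 := Gfun_ne_zero hq0 hq1 _ _ _ hw10 hw11 hw1q
    have hB : Gfun q (t - 1 - n') m' a' w2 ≠ 0 := Gfun_ne_zero hq0 hq1 _ _ _ hw20 hw21 hw2q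
    have e1 : Gfun q (n - t + 1) m a w1 = (w1 / wc) * Gfun q (n - t) m a w1 := by
      rw [hwc_def]; exact Gfun_succ hq0 hq1 _ _ _ hw10
    have e2 : Gfun q (t - n') m' a' w2 = (w2 / wc) * Gfun q (t - 1 - n') m' a' w2 := by
      rw [hwc_def]
      have := Gfun_succ hq0 hq1 (t - 1 - n') m' a' hw20
      rw [show t - 1 - n' + 1 = t - n' by ring] at this
      exact this
    have hsub : w1 - w2 ≠ 0 := sub_ne_zero.mpr hne
    set A := Gfun q (n - t) m a w1 with hA_def
    set B := Gfun q (t - 1 - n') m' a' w2 with hB_def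
    have ft : f t = (A * (w2 / wc * B))⁻¹ := by simp only [hf]; rw [e2]
    have ft1 : f (t - 1) = (w1 / wc * A * B)⁻¹ := by
      simp only [hf]
      rw [show n - (t - 1) = n - t + 1 by ring, e1]
    clear_value A B
    rw [e1, e2, ft, ft1]
    have h1 : (w1 / wc * A * (w2 / wc * B))⁻¹ = wc * wc * (w1 * A * (w2 * B))⁻¹ := by
      field_simp
    have h2 : (A * (w2 / wc * B))⁻¹ - (w1 / wc * A * B)⁻¹
        = wc * (w1 - w2) * (w1 * A * (w2 * B))⁻¹ := by
      field_simp
    rw [h1, h2]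
    field_simp
  have hsum : ∀ l ∈ Finset.Ioc N1 N2,
      (Gfun q (n - l + 1) m a w1 * Gfun q ((l : ℤ) - n') m' a' w2)⁻¹
        = (wc / (w1 - w2)) * (f l - f ((l : ℤ) - 1)) := fun l _ => key l
  rw [Finset.sum_congr rfl hsum, ← Finset.mul_sum]
  have htel : (∑ l ∈ Finset.Ioc N1 N2, (f l - f ((l : ℤ) - 1))) = f N2 - f N1 := by
    have : Finset.Ioc N1 N2 = Finset.Ico (N1 + 1) (N2 + 1) := by
      ext x; simp [Nat.lt_succ_iff, Nat.succ_le_iff]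
    rw [this, Finset.sum_Ico_eq_sum_range]
    have hrw : ∀ i, f (((N1 + 1 + i : ℕ) : ℤ)) - f (((N1 + 1 + i : ℕ) : ℤ) - 1)
        = (fun j : ℕ => f ((N1 : ℤ) + j)) (i + 1) - (fun j : ℕ => f ((N1 : ℤ) + j)) i := by
      intro i
      simp only
      congr 1 <;> · congr 1; push_cast; ring
    calc (∑ i ∈ Finset.range (N2 + 1 - (N1 + 1)),
            (f (((N1 + 1 + i : ℕ) : ℤ)) - f (((N1 + 1 + i : ℕ) : ℤ) - 1)))
        = ∑ i ∈ Finset.range (N2 - N1),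
            ((fun j : ℕ => f ((N1 : ℤ) + j)) (i + 1) - (fun j : ℕ => f ((N1 : ℤ) + j)) i) := by
          rw [show N2 + 1 - (N1 + 1) = N2 - N1 by omega]
          exact Finset.sum_congr rfl fun i _ => hrw i
      _ = f ((N1 : ℤ) + (N2 - N1 : ℕ)) - f ((N1 : ℤ) + (0 : ℕ)) :=
          Finset.sum_range_sub (fun j : ℕ => f ((N1 : ℤ) + (j : ℤ))) (N2 - N1)
      _ = f N2 - f N1 := by
          rw [show (N1 : ℤ) + ((N2 - N1 : ℕ) : ℤ) = (N2 : ℤ) by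
                push_cast [Nat.cast_sub hN.le]; ring,
              show (N1 : ℤ) + ((0 : ℕ) : ℤ) = (N1 : ℤ) by push_cast; ring]
  rw [htel]
  simp only [hf]

end
end
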